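/- arXiv:1405.6699 — 2 statements merged into one kernel-verified Lean document; each statement's English description precedes it below -/
import Mathlib

section
/- Let A and B be disjoint nonempty sets with 0 ∉ A ∪ B, F_1 = F_{ξ1η1}[A] = (A*, R_1) and F_2 = F_{ξ2η2}[B] = (B*, R_2) tree frames. Then Log(N_ω(F_1) × N_ω(F_2)) ⊆ Log(F_1) ⊗ Log(F_2). -/
set_option autoImplicit false

/-- Modal formulas with `n` modalities (propositional letters indexed by `ℕ`). -/
inductive MFormula (n : ℕ) : Type
  | prop : ℕ → MFormula n
  | bot  : MFormula n
  | imp  : MFormula n → MFormula n → MFormula n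
  | box  : Fin n → MFormula n → MFormula n

namespace MFormula

/-- Negation as an abbreviation: ¬φ := φ → ⊥. -/
def neg {n : ℕ} (φ : MFormula n) : MFormula n := φ.imp .bot

/-- Uniform substitution of formulas for propositional letters. -/
def subst {n : ℕ} (s : ℕ → MFormula n) : MFormula n → MFormula n
  | prop p  => s p
  | bot     => bot
  | imp φ ψ => imp (φ.subst s) (ψ.subst s)
  | box i φ => box i (φ.subst s)

end MFormula

/-- A classical tautology: true under every boolean valuation of formulas
(a valuation respecting `⊥` and `→`, arbitrary on letters and boxed formulas). -/
def IsTautology {n : ℕ} (φ : MFormula n) : Prop :=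
  ∀ v : MFormula n → Prop,
    ¬ v .bot → (∀ ψ χ : MFormula n, v (ψ.imp χ) ↔ (v ψ → v χ)) → v φ

/-- Normal modal logics with `n` modalities. -/
structure IsNormalLogic {n : ℕ} (L : Set (MFormula n)) : Prop where
  taut : ∀ φ : MFormula n, IsTautology φ → φ ∈ L
  kax : ∀ (i : Fin n) (p q : MFormula n),
    ((MFormula.box i (p.imp q)).imp ((MFormula.box i p).imp (MFormula.box i q))) ∈ L
  mp : ∀ φ ψ : MFormula n, φ.imp ψ ∈ L → φ ∈ L → ψ ∈ L
  subst : ∀ (φ : MFormula n) (s : ℕ → MFormula n), φ ∈ L → φ.subst s ∈ L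
  nec : ∀ (i : Fin n) (φ : MFormula n), φ ∈ L → MFormula.box i φ ∈ L

/-- The smallest normal logic containing `Γ`. -/
def NormalClosure {n : ℕ} (Γ : Set (MFormula n)) : Set (MFormula n) :=
  ⋂₀ {L : Set (MFormula n) | IsNormalLogic L ∧ Γ ⊆ L}

/-- The axiom □p → ¬□¬p. -/
def dAx : MFormula 1 :=
  (MFormula.box 0 (.prop 0)).imp (MFormula.neg (MFormula.box 0 (MFormula.neg (.prop 0))))

/-- The axiom □p → p. -/
def tAx : MFormula 1 := (MFormula.box 0 (.prop 0)).imp (.prop 0)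

/-- The axiom □p → □□p. -/
def fourAx : MFormula 1 :=
  (MFormula.box 0 (.prop 0)).imp (MFormula.box 0 (MFormula.box 0 (.prop 0)))

def LogicK : Set (MFormula 1) := NormalClosure ∅
def LogicD : Set (MFormula 1) := NormalClosure (LogicK ∪ {dAx})
def LogicT : Set (MFormula 1) := NormalClosure (LogicK ∪ {tAx})
def LogicD4 : Set (MFormula 1) := NormalClosure (LogicD ∪ {fourAx})
def LogicS4 : Set (MFormula 1) := NormalClosure (LogicT ∪ {fourAx})

/-- Translation of a unimodal formula into the bimodal language, replacing □ by □_i. -/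
def trTo (i : Fin 2) : MFormula 1 → MFormula 2
  | .prop p  => .prop p
  | .bot     => .bot
  | .imp φ ψ => .imp (trTo i φ) (trTo i ψ)
  | .box _ φ => .box i (trTo i φ)

/-- The fusion `L₁ ⊗ L₂` of two unimodal logics: the smallest bimodal normal logic
containing the translation of `L₁` (□ ↦ □₁) and of `L₂` (□ ↦ □₂). -/
def Fusion (L₁ L₂ : Set (MFormula 1)) : Set (MFormula 2) :=
  NormalClosure (trTo 0 '' L₁ ∪ trTo 1 '' L₂)

/-- Truth in a Kripke model. -/
def kSat {n : ℕ} {W : Type} (R : Fin n → W → W → Prop) (V : ℕ → Set W) :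
    W → MFormula n → Prop
  | w, .prop p  => w ∈ V p
  | _, .bot     => False
  | w, .imp φ ψ => kSat R V w φ → kSat R V w ψ
  | w, .box i φ => ∀ v : W, R i w v → kSat R V v φ

/-- The logic of a Kripke `n`-frame. -/
def KLogn {n : ℕ} {W : Type} [Nonempty W] (R : Fin n → W → W → Prop) :
    Set (MFormula n) :=
  {φ | ∀ (V : ℕ → Set W) (w : W), kSat R V w φ}

/-- The logic of a unimodal Kripke frame. -/
def KLog {W : Type} [Nonempty W] (R : W → W → Prop) : Set (MFormula 1) :=
  KLogn (fun _ => R)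

/-- The logic of a bimodal Kripke frame. -/
def KLog2 {W : Type} [Nonempty W] (R₁ R₂ : W → W → Prop) : Set (MFormula 2) :=
  KLogn ![R₁, R₂]

/-- Truth in a (monotone) neighborhood model: `x ⊨ □_i φ` iff the truth set of `φ`
belongs to the filter `τ i x`. -/
def nSat {n : ℕ} {X : Type} (τ : Fin n → X → Filter X) (V : ℕ → Set X) :
    X → MFormula n → Prop
  | x, .prop p  => x ∈ V p
  | _, .bot     => False
  | x, .imp φ ψ => nSat τ V x φ → nSat τ V x ψ
  | x, .box i φ => {y | nSat τ V y φ} ∈ τ i x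

/-- The logic of a neighborhood `n`-frame. -/
def NLogn {n : ℕ} {X : Type} [Nonempty X] (τ : Fin n → X → Filter X) :
    Set (MFormula n) :=
  {φ | ∀ (V : ℕ → Set X) (x : X), nSat τ V x φ}

/-- The logic of a unimodal neighborhood frame. -/
def NLog {X : Type} [Nonempty X] (τ : X → Filter X) : Set (MFormula 1) :=
  NLogn (fun _ => τ)

/-- The logic of a neighborhood 2-frame. -/
def NLog2 {X : Type} [Nonempty X] (τ₁ τ₂ : X → Filter X) : Set (MFormula 2) :=
  NLogn ![τ₁, τ₂]

/-- Validity of a unimodal formula in a neighborhood frame. -/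
def NValid {X : Type} (τ : X → Filter X) (φ : MFormula 1) : Prop :=
  ∀ (V : ℕ → Set X) (x : X), nSat (fun _ => τ) V x φ

/-- The neighborhood frame `N(F)` of a Kripke frame `F = (W, R)`:
`τ(w)` is the principal filter of `R(w)`. -/
def nOfK {W : Type} (R : W → W → Prop) (w : W) : Filter W :=
  Filter.principal {v | R w v}

/-- Bounded morphisms between neighborhood frames (with neighborhood functions
indexed by `ι`). -/
def IsNdMorphism {ι X Y : Type} (τ : ι → X → Filter X) (σ : ι → Y → Filter Y)
    (f : X → Y) : Prop :=
  Function.Surjective f ∧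
    ∀ (i : ι) (x : X),
      (∀ U ∈ τ i x, f '' U ∈ σ i (f x)) ∧
      (∀ V ∈ σ i (f x), ∃ U ∈ τ i x, f '' U ⊆ V)

/-- First neighborhood function of the product of two neighborhood frames:
`U ∈ τ'_1(x₁,x₂)` iff `∃ V ∈ τ₁ x₁, V × {x₂} ⊆ U`. -/
def prodTau1 {X₁ X₂ : Type} (τ₁ : X₁ → Filter X₁) (p : X₁ × X₂) :
    Filter (X₁ × X₂) :=
  (τ₁ p.1).map (fun x => (x, p.2))

/-- Second neighborhood function of the product of two neighborhood frames:
`U ∈ τ'_2(x₁,x₂)` iff `∃ V ∈ τ₂ x₂, {x₁} × V ⊆ U`. -/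
def prodTau2 {X₁ X₂ : Type} (τ₂ : X₂ → Filter X₂) (p : X₁ × X₂) :
    Filter (X₁ × X₂) :=
  (τ₂ p.2).map (fun y => (p.1, y))

/-- The successor relation on finite sequences: `a R b` iff `b = a·x` for some `x ∈ A`. -/
def sucRel (A : Type) (a b : List A) : Prop := ∃ x : A, b = a ++ [x]

/-- The four kinds of tree frames: irreflexive/reflexive, non-transitive/transitive. -/
inductive TreeKind : Type
  | inn  -- irreflexive non-transitive: F_in
  | rn   -- reflexive non-transitive: F_rn (reflexive closure)
  | itr  -- irreflexive transitive: F_it (transitive closure)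
  | rt   -- reflexive transitive: F_rt (reflexive-transitive closure)

/-- The relation of the tree frame `F_{ξη}[A]` on `A*`. -/
def treeRel (A : Type) : TreeKind → List A → List A → Prop
  | .inn => sucRel A
  | .rn  => fun a b => a = b ∨ sucRel A a b
  | .itr => Relation.TransGen (sucRel A)
  | .rt  => Relation.ReflTransGen (sucRel A)

/-- First relation of the product frame `F₁ ⊗ F₂` on `(A ⊔ B)*`:
`x R'_1 y` iff `y = x·z` for some `z ∈ A*` with `Λ R₁ z`. -/
def prodRel1 (A B : Type) (k : TreeKind) (x y : List (A ⊕ B)) : Prop :=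
  ∃ z : List A, treeRel A k [] z ∧ y = x ++ z.map Sum.inl

/-- Second relation of the product frame `F₁ ⊗ F₂` on `(A ⊔ B)*`. -/
def prodRel2 (A B : Type) (k : TreeKind) (x y : List (A ⊕ B)) : Prop :=
  ∃ z : List B, treeRel B k [] z ∧ y = x ++ z.map Sum.inr

/-- Pseudo-infinite sequences over `A ∪ {0}` (with `0` modelled by `none`, so
automatically `0 ∉ A`) that are eventually `0`. -/
def PSeq (A : Type) : Type :=
  {α : ℕ → Option A // ∃ N, ∀ k ≥ N, α k = none}

instance {A : Type} : Nonempty (PSeq A) := ⟨⟨fun _ => none, 0, fun _ _ => rfl⟩⟩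

/-- `st(α)`: the least `N` such that `α` has only zeros from position `N` on. -/
noncomputable def PSeq.st {A : Type} (α : PSeq A) : ℕ :=
  sInf {N | ∀ k ≥ N, α.1 k = none}

/-- `f_F(α)`: the finite sequence obtained from `α` by deleting all zeros. -/
noncomputable def PSeq.forget {A : Type} (α : PSeq A) : List A :=
  ((List.range α.st).map α.1).reduceOption

/-- The basic neighborhood `U_k(α)` of `α`, relative to the relation `R` on `A*`:
`{β ∈ X : α|_m = β|_m and f_F(α) R f_F(β)}` where `m = max(k, st(α))`. -/
def Unbhd {A : Type} (R : List A → List A → Prop) (k : ℕ) (α : PSeq A) :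
    Set (PSeq A) :=
  {β | (∀ i < max k α.st, α.1 i = β.1 i) ∧ R α.forget β.forget}

/-- The neighborhood function of `N_ω(F)`: `τ(α)` is the filter generated by the
base `{U_k(α) : k ∈ ℕ}`. -/
noncomputable def nOmega {A : Type} (R : List A → List A → Prop) (α : PSeq A) :
    Filter (PSeq A) :=
  ⨅ k : ℕ, Filter.principal (Unbhd R k α)

/-- The interleaving `x₁ y₁ x₂ y₂ …` of two pseudo-infinite sequences. -/
def interleave {A B : Type} (α : PSeq A) (β : PSeq B) : PSeq (A ⊕ B) :=
  ⟨fun n => if n % 2 = 0 then (α.1 (n / 2)).map Sum.inl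
            else (β.1 (n / 2)).map Sum.inr, by
    obtain ⟨N₁, h₁⟩ := α.2
    obtain ⟨N₂, h₂⟩ := β.2
    refine ⟨2 * max N₁ N₂, fun k hk => ?_⟩
    have hdiv : max N₁ N₂ ≤ k / 2 := by omega
    by_cases h : k % 2 = 0
    · simp [h, h₁ (k / 2) (le_trans (le_max_left _ _) hdiv)]
    · simp [h, h₂ (k / 2) (le_trans (le_max_right _ _) hdiv)]⟩

/-- The map `g`: delete all zeros from the interleaving of `α` and `β`. -/
noncomputable def gMap {A B : Type} (p : PSeq A × PSeq B) : List (A ⊕ B) :=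
  (interleave p.1 p.2).forget

/- ======================= Auxiliary development ======================= -/

deriving instance DecidableEq for MFormula

namespace S12

open MFormula

/-! ### Derived connectives -/

def andF {n : ℕ} (a b : MFormula n) : MFormula n := (a.imp b.neg).neg
def orF {n : ℕ} (a b : MFormula n) : MFormula n := a.neg.imp b

def conjL {n : ℕ} : List (MFormula n) → MFormula n
  | [] => MFormula.neg .bot
  | a :: l => andF a (conjL l)

def disjL {n : ℕ} : List (MFormula n) → MFormula n
  | [] => .bot
  | a :: l => orF a (disjL l)

def listImp {n : ℕ} (l : List (MFormula n)) (c : MFormula n) : MFormula n :=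
  l.foldr MFormula.imp c

def boxIter {n : ℕ} (i : Fin n) : ℕ → MFormula n → MFormula n
  | 0, a => a
  | d + 1, a => .box i (boxIter i d a)

/-! ### Boolean valuation lemmas -/

section BoolVal

variable {n : ℕ} (v : MFormula n → Prop)
  (hb : ¬ v .bot) (hi : ∀ ψ χ : MFormula n, v (ψ.imp χ) ↔ (v ψ → v χ))

include hb hi

theorem vneg (a : MFormula n) : v a.neg ↔ ¬ v a := by
  rw [MFormula.neg, hi]; exact ⟨fun h hv => hb (h hv), fun h hv => absurd hv h⟩

theorem vand (a b : MFormula n) : v (andF a b) ↔ (v a ∧ v b) := by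
  rw [andF, vneg v hb hi, hi, vneg v hb hi]; tauto

theorem vor (a b : MFormula n) : v (orF a b) ↔ (v a ∨ v b) := by
  rw [orF, hi, vneg v hb hi]; tauto

theorem vconjL (l : List (MFormula n)) : v (conjL l) ↔ ∀ a ∈ l, v a := by
  induction l with
  | nil => simp [conjL, vneg v hb hi, hb]
  | cons a l ih => simp [conjL, vand v hb hi, ih]

theorem vdisjL (l : List (MFormula n)) : v (disjL l) ↔ ∃ a ∈ l, v a := by
  induction l with
  | nil => simp [disjL, hb]
  | cons a l ih => simp [disjL, vor v hb hi, ih]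

theorem vlistImp (l : List (MFormula n)) (c : MFormula n) :
    v (listImp l c) ↔ ((∀ a ∈ l, v a) → v c) := by
  induction l with
  | nil => simp [listImp]
  | cons a l ih =>
    have e : listImp (a :: l) c = a.imp (listImp l c) := rfl
    rw [e, hi, ih]
    constructor
    · intro h hall; exact h (hall a (by simp)) (fun b hb => hall b (by simp [hb]))
    · intro h ha hl
      refine h ?_
      intro b hb
      rcases List.mem_cons.1 hb with h' | h'
      · exact h' ▸ ha
      · exact hl b h'

end BoolVal

/-! ### kSat instances of the boolean lemmas -/

section KSatVal

variable {n : ℕ} {W : Type} (R : Fin n → W → W → Prop) (V : ℕ → Set W) (x : W)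

theorem ksat_bot : ¬ kSat R V x (.bot : MFormula n) := fun h => h

theorem ksat_imp (a b : MFormula n) :
    kSat R V x (a.imp b) ↔ (kSat R V x a → kSat R V x b) := Iff.rfl

theorem ksat_neg (a : MFormula n) : kSat R V x a.neg ↔ ¬ kSat R V x a :=
  vneg _ (ksat_bot R V x) (ksat_imp R V x) a

theorem ksat_conjL (l : List (MFormula n)) :
    kSat R V x (conjL l) ↔ ∀ a ∈ l, kSat R V x a :=
  vconjL _ (ksat_bot R V x) (ksat_imp R V x) l

theorem ksat_disjL (l : List (MFormula n)) :
    kSat R V x (disjL l) ↔ ∃ a ∈ l, kSat R V x a :=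
  vdisjL _ (ksat_bot R V x) (ksat_imp R V x) l

end KSatVal

section NSatVal

variable {n : ℕ} {X : Type} (τ : Fin n → X → Filter X) (V : ℕ → Set X) (x : X)

theorem nsat_bot : ¬ nSat τ V x (.bot : MFormula n) := fun h => h

theorem nsat_imp (a b : MFormula n) :
    nSat τ V x (a.imp b) ↔ (nSat τ V x a → nSat τ V x b) := Iff.rfl

end NSatVal

/-! ### Normal-logic closure facts -/

section Normal

variable {n : ℕ} {L : Set (MFormula n)} (hL : IsNormalLogic L)

include hL

theorem lmem_of_taut {a : MFormula n} (h : IsTautology a) : a ∈ L := hL.taut a h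

theorem taut_mp1 {a b : MFormula n} (h : IsTautology (a.imp b)) (ha : a ∈ L) : b ∈ L :=
  hL.mp _ _ (hL.taut _ h) ha

theorem taut_mp2 {a b c : MFormula n} (h : IsTautology (a.imp (b.imp c)))
    (ha : a ∈ L) (hb : b ∈ L) : c ∈ L :=
  hL.mp _ _ (hL.mp _ _ (hL.taut _ h) ha) hb

theorem conjL_mem {l : List (MFormula n)} (h : ∀ a ∈ l, a ∈ L) : conjL l ∈ L := by
  induction l with
  | nil =>
    exact hL.taut _ (by intro v hb hi; simp only [conjL, vneg v hb hi]; exact hb)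
  | cons a l ih =>
    refine taut_mp2 hL ?_ (h a (by simp)) (ih (fun b hb => h b (by simp [hb])))
    intro v hb hi
    simp only [conjL, hi, vand v hb hi]
    tauto

theorem boxIter_mem {a : MFormula n} (i : Fin n) (d : ℕ) (h : a ∈ L) :
    boxIter i d a ∈ L := by
  induction d with
  | zero => exact h
  | succ d ih => exact hL.nec _ _ ih

theorem listImp_mp {l : List (MFormula n)} {c : MFormula n}
    (h : listImp l c ∈ L) (hl : ∀ a ∈ l, a ∈ L) : c ∈ L := by
  induction l with
  | nil => exact h
  | cons a l ih =>
    exact ih (hL.mp _ _ h (hl a (by simp))) (fun b hb => hl b (by simp [hb]))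

/-- Pruning a disjunction of the disjuncts refuted in `L`. -/
theorem disj_filter_mem {γ : Type} (f : γ → MFormula n) (P : γ → Prop)
    [DecidablePred P] (l : List γ)
    (hrefut : ∀ u ∈ l, ¬ P u → (f u).neg ∈ L) :
    (disjL (l.map f)).imp (disjL ((l.filter (fun u => P u)).map f)) ∈ L := by
  induction l with
  | nil =>
    exact hL.taut _ (by intro v hb hi; rw [hi]; exact id)
  | cons a l ih =>
    have ih' := ih (fun u hu h => hrefut u (by simp [hu]) h)
    by_cases hP : P a
    · have : (a :: l).filter (fun u => P u) = a :: l.filter (fun u => P u) := by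
        simp [List.filter, hP]
      rw [this]
      refine taut_mp1 hL ?_ ih'
      intro v hb hi
      simp only [List.map, disjL, hi, vor v hb hi]
      tauto
    · have : (a :: l).filter (fun u => P u) = l.filter (fun u => P u) := by
        simp [List.filter, hP]
      rw [this]
      refine taut_mp2 hL ?_ (hrefut a (by simp) hP) ih'
      intro v hb hi
      simp only [List.map, disjL, hi, vor v hb hi, vneg v hb hi]
      tauto

end Normal

theorem isNormal_sInter {n : ℕ} (C : Set (Set (MFormula n))) (hC : ∀ L ∈ C, IsNormalLogic L) :
    IsNormalLogic (⋂₀ C) := by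
  constructor
  · exact fun φ h => Set.mem_sInter.2 fun L hl => (hC L hl).taut φ h
  · exact fun i p q => Set.mem_sInter.2 fun L hl => (hC L hl).kax i p q
  · intro φ ψ h1 h2
    exact Set.mem_sInter.2 fun L hl => (hC L hl).mp φ ψ (h1 L hl) (h2 L hl)
  · intro φ s h
    exact Set.mem_sInter.2 fun L hl => (hC L hl).subst φ s (h L hl)
  · intro i φ h
    exact Set.mem_sInter.2 fun L hl => (hC L hl).nec i φ (h L hl)

theorem isNormal_normalClosure {n : ℕ} (Γ : Set (MFormula n)) :
    IsNormalLogic (NormalClosure Γ) :=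
  isNormal_sInter _ (fun _ hl => hl.1)

theorem subset_normalClosure {n : ℕ} (Γ : Set (MFormula n)) :
    Γ ⊆ NormalClosure Γ :=
  fun a ha => Set.mem_sInter.2 fun _ hl => hl.2 ha

end S12
namespace S12

open MFormula

/-! ### Modal depth and subformulas -/

def md {n : ℕ} : MFormula n → ℕ
  | .prop _ => 0
  | .bot => 0
  | .imp a b => max (md a) (md b)
  | .box _ a => md a + 1

def subf {n : ℕ} : MFormula n → List (MFormula n)
  | .prop p => [.prop p]
  | .bot => [.bot]
  | .imp a b => .imp a b :: (subf a ++ subf b)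
  | .box i a => .box i a :: subf a

theorem self_mem_subf {n : ℕ} (a : MFormula n) : a ∈ subf a := by
  cases a <;> simp [subf]

theorem subf_trans {n : ℕ} {a b : MFormula n} (h : b ∈ subf a) : subf b ⊆ subf a := by
  induction a with
  | prop p => simp [subf] at h; subst h; exact fun x hx => hx
  | bot => simp [subf] at h; subst h; exact fun x hx => hx
  | imp a₁ a₂ ih₁ ih₂ =>
    rcases List.mem_cons.1 h with h | h
    · subst h; exact fun x hx => hx
    · rcases List.mem_append.1 h with h | h
      · exact fun x hx => List.mem_cons.2 (Or.inr (List.mem_append.2 (Or.inl (ih₁ h hx))))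
      · exact fun x hx => List.mem_cons.2 (Or.inr (List.mem_append.2 (Or.inr (ih₂ h hx))))
  | box i a ih =>
    rcases List.mem_cons.1 h with h | h
    · subst h; exact fun x hx => hx
    · exact fun x hx => List.mem_cons.2 (Or.inr (ih h hx))

theorem md_le_of_mem_subf {n : ℕ} {a b : MFormula n} (h : b ∈ subf a) : md b ≤ md a := by
  induction a with
  | prop p => simp [subf] at h; subst h; exact le_rfl
  | bot => simp [subf] at h; subst h; exact le_rfl
  | imp a₁ a₂ ih₁ ih₂ =>
    rcases List.mem_cons.1 h with h | h
    · subst h; exact le_rfl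
    · rcases List.mem_append.1 h with h | h
      · exact le_trans (ih₁ h) (le_max_left _ _)
      · exact le_trans (ih₂ h) (le_max_right _ _)
  | box i a ih =>
    rcases List.mem_cons.1 h with h | h
    · subst h; exact le_rfl
    · exact le_trans (ih h) (by simp [md])

/-! ### Encoding of formulas into ℕ -/

def enc {n : ℕ} : MFormula n → ℕ
  | .prop p => Nat.pair 0 p
  | .bot => Nat.pair 1 0
  | .imp a b => Nat.pair 2 (Nat.pair (enc a) (enc b))
  | .box i a => Nat.pair 3 (Nat.pair i.1 (enc a))

theorem enc_injective {n : ℕ} : Function.Injective (enc (n := n)) := by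
  intro a
  induction a with
  | prop p => intro b hb; cases b <;> simp [enc, Nat.pair_eq_pair] at hb ⊢; exact hb
  | bot => intro b hb; cases b <;> simp [enc, Nat.pair_eq_pair] at hb ⊢
  | imp a₁ a₂ ih₁ ih₂ =>
    intro b hb; cases b <;> simp [enc, Nat.pair_eq_pair] at hb ⊢
    exact ⟨ih₁ hb.1, ih₂ hb.2⟩
  | box i a ih =>
    intro b hb; cases b <;> simp [enc, Nat.pair_eq_pair] at hb ⊢
    exact ⟨Fin.ext hb.1, ih hb.2⟩

/-! ### The reduction of bimodal formulas to unimodal ones -/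

open Classical in
noncomputable def decF (e : ℕ) : MFormula 2 :=
  if h : ∃ χ : MFormula 2, enc χ = e then h.choose else .bot

noncomputable def red (i : Fin 2) : MFormula 2 → MFormula 1
  | .prop p => .prop (2 * p)
  | .bot => .bot
  | .imp a b => .imp (red i a) (red i b)
  | .box j a => if j = i then .box 0 (red i a) else .prop (2 * enc (MFormula.box j a) + 1)

noncomputable def backSub : ℕ → MFormula 2 := fun m =>
  if m % 2 = 0 then .prop (m / 2) else decF ((m - 1) / 2)

theorem backSub_red (i : Fin 2) (a : MFormula 2) :
    (trTo i (red i a)).subst backSub = a := by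
  induction a with
  | prop p =>
    simp [red, trTo, MFormula.subst, backSub, Nat.mul_div_cancel_left, Nat.mul_mod_right]
  | bot => simp [red, trTo, MFormula.subst]
  | imp a b iha ihb => simp [red, trTo, MFormula.subst, iha, ihb]
  | box j a ih =>
    by_cases hj : j = i
    · subst hj; simp [red, trTo, MFormula.subst, ih]
    · simp only [red, if_neg hj, trTo, MFormula.subst, backSub]
      have h2 : (2 * enc (MFormula.box j a) + 1) % 2 = 1 := by omega
      rw [if_neg (by omega)]
      have : (2 * enc (MFormula.box j a) + 1 - 1) / 2 = enc (MFormula.box j a) := by omega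
      rw [this]
      have hex : ∃ χ : MFormula 2, enc χ = enc (MFormula.box j a) := ⟨MFormula.box j a, rfl⟩
      rw [decF, dif_pos hex]
      exact enc_injective hex.choose_spec

theorem red_neg (i : Fin 2) (a : MFormula 2) : red i a.neg = (red i a).neg := rfl
theorem red_andF (i : Fin 2) (a b : MFormula 2) :
    red i (andF a b) = andF (red i a) (red i b) := rfl
theorem red_orF (i : Fin 2) (a b : MFormula 2) :
    red i (orF a b) = orF (red i a) (red i b) := rfl

theorem red_conjL (i : Fin 2) (l : List (MFormula 2)) :
    red i (conjL l) = conjL (l.map (red i)) := by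
  induction l with
  | nil => rfl
  | cons a l ih => simp [conjL, red_andF, ih, List.map]

theorem red_disjL (i : Fin 2) (l : List (MFormula 2)) :
    red i (disjL l) = disjL (l.map (red i)) := by
  induction l with
  | nil => rfl
  | cons a l ih => simp [disjL, red_orF, ih, List.map]

theorem red_boxIter (i : Fin 2) (d : ℕ) (a : MFormula 2) :
    red i (boxIter i d a) = boxIter 0 d (red i a) := by
  induction d with
  | zero => rfl
  | succ d ih => simp [boxIter, red, ih]

/-! ### Tree relation lemmas -/

section Tree

variable {A : Type}

theorem sucRel_append_iff (v z : List A) :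
    sucRel A v (v ++ z) ↔ sucRel A [] z := by
  constructor
  · rintro ⟨x, hx⟩
    exact ⟨x, by simpa using List.append_cancel_left hx⟩
  · rintro ⟨x, hx⟩; exact ⟨x, by rw [hx]; simp⟩

theorem transGen_sucRel_decomp {v y : List A}
    (h : Relation.TransGen (sucRel A) v y) :
    ∃ w, y = v ++ w ∧ Relation.TransGen (sucRel A) [] w := by
  induction h with
  | single h =>
    obtain ⟨x, hx⟩ := h
    exact ⟨[x], hx, Relation.TransGen.single ⟨x, rfl⟩⟩
  | tail _ h ih =>
    obtain ⟨w, rfl, hw⟩ := ih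
    obtain ⟨x, hx⟩ := h
    refine ⟨w ++ [x], by rw [hx, List.append_assoc], hw.tail ⟨x, rfl⟩⟩

theorem reflTransGen_sucRel_decomp {v y : List A}
    (h : Relation.ReflTransGen (sucRel A) v y) :
    ∃ w, y = v ++ w ∧ Relation.ReflTransGen (sucRel A) [] w := by
  induction h with
  | refl => exact ⟨[], by simp, Relation.ReflTransGen.refl⟩
  | tail _ h ih =>
    obtain ⟨w, rfl, hw⟩ := ih
    obtain ⟨x, hx⟩ := h
    exact ⟨w ++ [x], by rw [hx, List.append_assoc], hw.tail ⟨x, rfl⟩⟩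

theorem transGen_sucRel_append {v w : List A}
    (h : Relation.TransGen (sucRel A) [] w) :
    Relation.TransGen (sucRel A) v (v ++ w) := by
  induction h with
  | single h =>
    obtain ⟨x, hx⟩ := h
    subst hx
    exact Relation.TransGen.single ⟨x, by simp⟩
  | tail _ h ih =>
    obtain ⟨x, hx⟩ := h
    subst hx
    exact ih.tail ⟨x, by rw [List.append_assoc]⟩

theorem reflTransGen_sucRel_append {v w : List A}
    (h : Relation.ReflTransGen (sucRel A) [] w) :
    Relation.ReflTransGen (sucRel A) v (v ++ w) := by
  induction h with
  | refl => simpa using Relation.ReflTransGen.refl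
  | tail _ h ih =>
    obtain ⟨x, hx⟩ := h
    subst hx
    exact ih.tail ⟨x, by rw [List.append_assoc]⟩

/-- T1: translation invariance of the tree relation. -/
theorem treeRel_append_iff (k : TreeKind) (v z : List A) :
    treeRel A k v (v ++ z) ↔ treeRel A k [] z := by
  cases k with
  | inn => exact sucRel_append_iff v z
  | rn =>
    simp only [treeRel]
    rw [sucRel_append_iff]
    constructor
    · rintro (h | h)
      · left
        have hz : z = [] := by
          have h2 := congrArg List.length h
          simp only [List.length_append] at h2
          have : z.length = 0 := by omega
          exact List.length_eq_zero_iff.1 this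
        simp [hz]
      · right; exact h
    · rintro (h | h)
      · left; subst h; simp
      · right; exact h
  | itr =>
    constructor
    · intro h
      obtain ⟨w, hw, h'⟩ := transGen_sucRel_decomp h
      rwa [List.append_cancel_left hw]
    · exact transGen_sucRel_append
  | rt =>
    constructor
    · intro h
      obtain ⟨w, hw, h'⟩ := reflTransGen_sucRel_decomp h
      rwa [List.append_cancel_left hw]
    · exact reflTransGen_sucRel_append

/-- T2: every tree-relation step is an append. -/
theorem treeRel_decomp {k : TreeKind} {v y : List A} (h : treeRel A k v y) :
    ∃ w, y = v ++ w ∧ treeRel A k [] w := by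
  cases k with
  | inn => obtain ⟨x, hx⟩ := h; exact ⟨[x], hx, ⟨x, rfl⟩⟩
  | rn =>
    rcases h with h | ⟨x, hx⟩
    · exact ⟨[], by simp [h], Or.inl rfl⟩
    · exact ⟨[x], hx, Or.inr ⟨x, rfl⟩⟩
  | itr => exact transGen_sucRel_decomp h
  | rt => exact reflTransGen_sucRel_decomp h

/-! ### Iterated relations and satisfaction of iterated boxes -/

def powR {W : Type} (R : W → W → Prop) : ℕ → W → W → Prop
  | 0 => Eq
  | d + 1 => fun x z => ∃ y, R x y ∧ powR R d y z

theorem ksat_boxIter {n : ℕ} {W : Type} (R : Fin n → W → W → Prop) (V : ℕ → Set W)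
    (i : Fin n) (d : ℕ) (a : MFormula n) (x : W) :
    kSat R V x (boxIter i d a) ↔ ∀ y, powR (R i) d x y → kSat R V y a := by
  induction d generalizing x with
  | zero =>
    simp only [boxIter, powR]
    exact ⟨fun h y hy => hy ▸ h, fun h => h x rfl⟩
  | succ d ih =>
    simp only [boxIter, powR]
    constructor
    · rintro h y ⟨m, hm, hp⟩
      exact (ih m).1 (h m hm) y hp
    · intro h m hm
      exact (ih m).2 (fun y hy => h y ⟨m, hm, hy⟩)

/-! ### Generated-submodel transplanting for tree frames -/

theorem ksat_transplant {A : Type} (k : TreeKind) (V : ℕ → Set (List A)) (x₀ : List A)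
    (a : MFormula 1) :
    ∀ z, kSat (fun _ : Fin 1 => treeRel A k) (fun p => {z | x₀ ++ z ∈ V p}) z a ↔
      kSat (fun _ : Fin 1 => treeRel A k) V (x₀ ++ z) a := by
  induction a with
  | prop p => intro z; exact Iff.rfl
  | bot => intro z; simp [kSat]
  | imp a b iha ihb => intro z; simp only [kSat]; rw [iha, ihb]
  | box i a ih =>
    intro z
    simp only [kSat]
    constructor
    · intro h y hy
      obtain ⟨w, rfl, hw⟩ := treeRel_decomp hy
      have h1 : treeRel A k z (z ++ w) := (treeRel_append_iff k z w).2 hw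
      have h2 := (ih (z ++ w)).1 (h (z ++ w) h1)
      rwa [← List.append_assoc] at h2
    · intro h y hy
      obtain ⟨w, rfl, hw⟩ := treeRel_decomp hy
      refine (ih (z ++ w)).2 ?_
      rw [← List.append_assoc]
      exact h (x₀ ++ z ++ w) ((treeRel_append_iff k (x₀ ++ z) w).2 hw)

end Tree

end S12
namespace S12

section Seq

variable {A B : Type}

theorem stSpec (α : PSeq A) : ∀ k ≥ α.st, α.1 k = none :=
  Nat.sInf_mem (⟨α.2.choose, α.2.choose_spec⟩ : Set.Nonempty {N | ∀ k ≥ N, α.1 k = none})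

theorem stLe (α : PSeq A) {N : ℕ} (h : ∀ k ≥ N, α.1 k = none) : α.st ≤ N :=
  Nat.sInf_le h

theorem reduceOption_all_none {γ : Type} {l : List (Option γ)} (h : ∀ x ∈ l, x = none) :
    l.reduceOption = [] := by
  induction l with
  | nil => rfl
  | cons a l ih =>
    have ha := h a (by simp)
    subst ha
    simpa using ih (fun x hx => h x (by simp [hx]))

/-- Splitting a range-indexed `reduceOption` at position `m`. -/
theorem reduceOption_range_split {γ : Type} (f : ℕ → Option γ) {m N : ℕ} (h : m ≤ N) :
    ((List.range N).map f).reduceOption =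
      ((List.range m).map f).reduceOption ++
        ((List.range (N - m)).map (fun t => f (m + t))).reduceOption := by
  conv_lhs => rw [show N = m + (N - m) by omega]
  rw [List.range_add, List.map_append, List.reduceOption_append, List.map_map]
  have : (f ∘ fun x => m + x) = fun t => f (m + t) := rfl
  rw [this]

theorem forget_eq_range {α : PSeq A} {N : ℕ} (h : α.st ≤ N) :
    α.forget = ((List.range N).map α.1).reduceOption := by
  rw [PSeq.forget, reduceOption_range_split α.1 h]
  rw [reduceOption_all_none (l := (List.range (N - α.st)).map (fun t => α.1 (α.st + t)))]
  · simp
  · intro x hx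
    simp only [List.mem_map, List.mem_range] at hx
    obtain ⟨t, _, rfl⟩ := hx
    exact stSpec α _ (by omega)

theorem getElemQ_range_reduceOption {γ : Type} (w : List γ) :
    ∀ M, w.length ≤ M → ((List.range M).map (fun t => w[t]?)).reduceOption = w := by
  induction w with
  | nil =>
    intro M _
    apply reduceOption_all_none
    intro x hx
    simp only [List.mem_map] at hx
    obtain ⟨t, _, rfl⟩ := hx
    simp
  | cons a w ih =>
    intro M hM
    obtain ⟨M', rfl⟩ : ∃ M', M = M' + 1 := ⟨M - 1, by simp at hM; omega⟩
    rw [List.range_succ_eq_map, List.map_cons, List.map_map]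
    simp only [List.reduceOption_cons_of_some, List.getElem?_cons_zero]
    congr 1
    · have : ((fun t => (a :: w)[t]?) ∘ (· + 1)) = (fun t => w[t]?) := by
        funext t; simp
      rw [this]
      exact ih M' (by simp at hM; omega)

/-- Entries of the interleaving. -/
theorem interleave_even (α : PSeq A) (β : PSeq B) (i : ℕ) :
    (interleave α β).1 (2 * i) = (α.1 i).map Sum.inl := by
  simp [interleave, Nat.mul_mod_right, Nat.mul_div_cancel_left]

theorem interleave_odd (α : PSeq A) (β : PSeq B) (i : ℕ) :
    (interleave α β).1 (2 * i + 1) = (β.1 i).map Sum.inr := by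
  have h1 : (2 * i + 1) % 2 = 1 := by omega
  have h2 : (2 * i + 1) / 2 = i := by omega
  simp [interleave, h1, h2]

theorem interleave_st_le (α : PSeq A) (β : PSeq B) {N : ℕ} (hα : α.st ≤ N) (hβ : β.st ≤ N) :
    (interleave α β).st ≤ 2 * N := by
  apply stLe
  intro k hk
  rcases Nat.even_or_odd k with ⟨i, hi⟩ | ⟨i, hi⟩
  · have : k = 2 * i := by omega
    subst this
    rw [interleave_even, stSpec α i (by omega)]; rfl
  · have : k = 2 * i + 1 := by omega
    subst this
    rw [interleave_odd, stSpec β i (by omega)]; rfl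

/-- The even/odd block computation. -/
theorem interleave_block (α' : PSeq A) (β : PSeq B) (m₀ : ℕ)
    (hβ : ∀ i ≥ m₀, β.1 i = none) :
    ∀ j, ((List.range (2 * j)).map (fun t => (interleave α' β).1 (2 * m₀ + t))).reduceOption
      = (((List.range j).map (fun t => α'.1 (m₀ + t))).reduceOption).map Sum.inl := by
  intro j
  induction j with
  | zero => simp
  | succ j ih =>
    have h2 : 2 * (j + 1) = (2 * j + 1) + 1 := by ring
    rw [h2, List.range_succ, List.range_succ, List.map_append, List.map_append,
      List.reduceOption_append, List.reduceOption_append, ih]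
    conv_rhs => rw [List.range_succ, List.map_append, List.reduceOption_append,
      List.map_append]
    rw [List.append_assoc]
    congr 1
    have he : 2 * m₀ + 2 * j = 2 * (m₀ + j) := by ring
    have ho : 2 * m₀ + (2 * j + 1) = 2 * (m₀ + j) + 1 := by ring
    simp only [List.map_cons, List.map_nil, he, ho, interleave_even, interleave_odd,
      hβ (m₀ + j) (by omega), Option.map_none]
    cases α'.1 (m₀ + j) <;> simp [List.reduceOption]

/-- The key decomposition: if `α'` agrees with `α` below `m` and `m` dominates
`st α` and `st β`, then both the forgetful images and the `g`-images decompose. -/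
theorem split_main (α α' : PSeq A) (β : PSeq B) (m N : ℕ)
    (hpre : ∀ i < m, α'.1 i = α.1 i) (hm : α.st ≤ m) (hb : β.st ≤ m)
    (hmN : m ≤ N) (hN : α'.st ≤ N) :
    α'.forget = α.forget ++ ((List.range (N - m)).map (fun t => α'.1 (m + t))).reduceOption ∧
    gMap (α', β) = gMap (α, β) ++
      (((List.range (N - m)).map (fun t => α'.1 (m + t))).reduceOption).map Sum.inl := by
  have hfirst : ((List.range m).map α'.1) = ((List.range m).map α.1) := by
    apply List.map_congr_left
    intro i hi
    exact hpre i (List.mem_range.1 hi)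
  constructor
  · rw [forget_eq_range hN, reduceOption_range_split α'.1 hmN, hfirst,
      ← forget_eq_range hm]
  · have hb' : ∀ i ≥ m, β.1 i = none := fun i hi => stSpec β i (le_trans hb hi)
    have hst1 : (interleave α' β).st ≤ 2 * N :=
      interleave_st_le α' β hN (le_trans hb hmN)
    have hst2 : (interleave α β).st ≤ 2 * m := interleave_st_le α β hm hb
    have hfirst2 : ((List.range (2 * m)).map (interleave α' β).1)
        = ((List.range (2 * m)).map (interleave α β).1) := by
      apply List.map_congr_left
      intro i hi
      have hi' := List.mem_range.1 hi
      rcases Nat.even_or_odd i with ⟨t, ht⟩ | ⟨t, ht⟩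
      · have : i = 2 * t := by omega
        subst this
        rw [interleave_even, interleave_even, hpre t (by omega)]
      · have : i = 2 * t + 1 := by omega
        subst this
        rw [interleave_odd, interleave_odd]
    show (interleave α' β).forget = (interleave α β).forget ++ _
    rw [forget_eq_range hst1, reduceOption_range_split (interleave α' β).1
      (show 2 * m ≤ 2 * N by omega), hfirst2, ← forget_eq_range hst2]
    congr 1
    have : 2 * N - 2 * m = 2 * (N - m) := by omega
    rw [this, interleave_block α' β m hb']

/-- Forward direction: each member of a basic neighborhood appends a related word. -/
theorem unbhd_decomp (kk : TreeKind) (α α' : PSeq A) (β : PSeq B) (k : ℕ)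
    (hk : β.st ≤ k) (hmem : α' ∈ Unbhd (treeRel A kk) k α) :
    ∃ w : List A, treeRel A kk [] w ∧ gMap (α', β) = gMap (α, β) ++ w.map Sum.inl := by
  obtain ⟨hpre, hrel⟩ := hmem
  set m := max k α.st with hm
  have h1 : α.st ≤ m := le_max_right _ _
  have h2 : β.st ≤ m := le_trans hk (le_max_left _ _)
  set N := max m α'.st with hN
  obtain ⟨hf, hg⟩ := split_main α α' β m N (fun i hi => (hpre i hi).symm) h1 h2 (le_max_left _ _) (le_max_right _ _)
  set w := ((List.range (N - m)).map (fun t => α'.1 (m + t))).reduceOption with hw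
  refine ⟨w, ?_, hg⟩
  rw [hf] at hrel
  exact (treeRel_append_iff kk α.forget w).1 hrel

/-- Backward direction: insertion of an arbitrary word `w` deep beyond position `k`. -/
theorem unbhd_insert (kk : TreeKind) (α : PSeq A) (β : PSeq B) (k : ℕ) (w : List A)
    (hw : treeRel A kk [] w) :
    ∃ α', α' ∈ Unbhd (treeRel A kk) k α ∧ gMap (α', β) = gMap (α, β) ++ w.map Sum.inl := by
  classical
  set m₀ := max (max k α.st) β.st with hm₀
  have hα : α.st ≤ m₀ := le_trans (le_max_right _ _) (le_max_left _ _)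
  have hβ : β.st ≤ m₀ := le_max_right _ _
  set f : ℕ → Option A := fun i => if i < m₀ then α.1 i else w[(i - m₀)]? with hf
  have hnone : ∀ i ≥ m₀ + w.length, f i = none := by
    intro i hi
    rw [hf]
    dsimp only
    rw [if_neg (by omega)]
    exact List.getElem?_eq_none (by omega)
  set α' : PSeq A := ⟨f, m₀ + w.length, hnone⟩ with hα'
  have hpre : ∀ i < m₀, α'.1 i = α.1 i := by
    intro i hi
    show f i = _
    rw [hf]
    exact if_pos hi
  have hst' : α'.st ≤ m₀ + w.length := stLe _ hnone
  obtain ⟨hfg, hg⟩ := split_main α α' β m₀ (m₀ + w.length) hpre hα hβ (by omega) hst'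
  have htail : ((List.range (m₀ + w.length - m₀)).map (fun t => α'.1 (m₀ + t))).reduceOption
      = w := by
    have h1 : m₀ + w.length - m₀ = w.length := by omega
    rw [h1]
    have h2 : ((List.range w.length).map (fun t => α'.1 (m₀ + t)))
        = (List.range w.length).map (fun t => w[t]?) := by
      apply List.map_congr_left
      intro t ht
      have ht' := List.mem_range.1 ht
      show f (m₀ + t) = _
      rw [hf]
      dsimp only
      rw [if_neg (by omega)]
      congr 1
      omega
    rw [h2]
    exact getElemQ_range_reduceOption w w.length le_rfl
  rw [htail] at hfg hg
  refine ⟨α', ⟨?_, ?_⟩, hg⟩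
  · intro i hi
    have : i < m₀ := by
      have := le_trans (le_max_left k α.st) (le_max_left (max k α.st) β.st)
      omega
    exact (hpre i this).symm
  · rw [hfg]
    exact (treeRel_append_iff kk α.forget w).2 hw

theorem unbhd_antitone (R : List A → List A → Prop) (α : PSeq A) {k k' : ℕ} (h : k ≤ k') :
    Unbhd R k' α ⊆ Unbhd R k α := by
  intro x hx
  refine ⟨fun i hi => hx.1 i (lt_of_lt_of_le hi (max_le_max h le_rfl)), hx.2⟩

theorem mem_nOmega (R : List A → List A → Prop) (α : PSeq A) (s : Set (PSeq A)) :
    s ∈ nOmega R α ↔ ∃ k, Unbhd R k α ⊆ s := by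
  rw [nOmega, Filter.mem_iInf_of_directed]
  · simp only [Filter.mem_principal]
  · intro k k'
    refine ⟨max k k', ?_, ?_⟩
    · exact Filter.principal_mono.2 (unbhd_antitone R α (le_max_left _ _))
    · exact Filter.principal_mono.2 (unbhd_antitone R α (le_max_right _ _))

theorem mem_prodTau1 (R : List A → List A → Prop) (α : PSeq A) (β : PSeq B)
    (T : Set (PSeq A × PSeq B)) :
    T ∈ prodTau1 (nOmega R) (α, β) ↔ ∃ k, ∀ α' ∈ Unbhd R k α, (α', β) ∈ T := by
  rw [prodTau1, Filter.mem_map, mem_nOmega]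
  constructor
  · rintro ⟨k, hk⟩
    exact ⟨k, fun α' hα' => hk hα'⟩
  · rintro ⟨k, hk⟩
    exact ⟨k, fun α' hα' => hk α' hα'⟩

theorem mem_prodTau2 (R : List B → List B → Prop) (α : PSeq A) (β : PSeq B)
    (T : Set (PSeq A × PSeq B)) :
    T ∈ prodTau2 (nOmega R) (α, β) ↔ ∃ k, ∀ β' ∈ Unbhd R k β, (α, β') ∈ T := by
  rw [prodTau2, Filter.mem_map, mem_nOmega]
  constructor
  · rintro ⟨k, hk⟩
    exact ⟨k, fun β' hβ' => hk hβ'⟩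
  · rintro ⟨k, hk⟩
    exact ⟨k, fun β' hβ' => hk β' hβ'⟩

def zeroSeq (A : Type) : PSeq A := ⟨fun _ => none, 0, fun _ _ => rfl⟩

theorem st_zeroSeq : (zeroSeq A).st = 0 :=
  Nat.le_zero.1 (stLe _ (fun _ _ => rfl))

theorem forget_zeroSeq : (zeroSeq A).forget = [] := by
  rw [PSeq.forget, st_zeroSeq]
  rfl

theorem gMap_zero : gMap (zeroSeq A, zeroSeq B) = [] := by
  rw [gMap, PSeq.forget]
  have h : (interleave (zeroSeq A) (zeroSeq B)).st = 0 := by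
    apply Nat.le_zero.1
    apply stLe
    intro kk _
    show (if kk % 2 = 0 then _ else _) = none
    split <;> rfl
  rw [h]
  rfl

end Seq

end S12
namespace S12

section Seq2

variable {A B : Type}

theorem interleave_block2 (α : PSeq A) (β' : PSeq B) (m₀ : ℕ)
    (hα : ∀ i ≥ m₀, α.1 i = none) :
    ∀ j, ((List.range (2 * j)).map (fun t => (interleave α β').1 (2 * m₀ + t))).reduceOption
      = (((List.range j).map (fun t => β'.1 (m₀ + t))).reduceOption).map Sum.inr := by
  intro j
  induction j with
  | zero => simp
  | succ j ih =>
    have h2 : 2 * (j + 1) = (2 * j + 1) + 1 := by ring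
    rw [h2, List.range_succ, List.range_succ, List.map_append, List.map_append,
      List.reduceOption_append, List.reduceOption_append, ih]
    conv_rhs => rw [List.range_succ, List.map_append, List.reduceOption_append,
      List.map_append]
    rw [List.append_assoc]
    congr 1
    have he : 2 * m₀ + 2 * j = 2 * (m₀ + j) := by ring
    have ho : 2 * m₀ + (2 * j + 1) = 2 * (m₀ + j) + 1 := by ring
    simp only [List.map_cons, List.map_nil, he, ho, interleave_even, interleave_odd,
      hα (m₀ + j) (by omega), Option.map_none]
    cases β'.1 (m₀ + j) <;> simp [List.reduceOption]

theorem split_main2 (β β' : PSeq B) (α : PSeq A) (m N : ℕ)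
    (hpre : ∀ i < m, β'.1 i = β.1 i) (hm : β.st ≤ m) (ha : α.st ≤ m)
    (hmN : m ≤ N) (hN : β'.st ≤ N) :
    β'.forget = β.forget ++ ((List.range (N - m)).map (fun t => β'.1 (m + t))).reduceOption ∧
    gMap (α, β') = gMap (α, β) ++
      (((List.range (N - m)).map (fun t => β'.1 (m + t))).reduceOption).map Sum.inr := by
  have hfirst : ((List.range m).map β'.1) = ((List.range m).map β.1) := by
    apply List.map_congr_left
    intro i hi
    exact hpre i (List.mem_range.1 hi)
  constructor
  · rw [forget_eq_range hN, reduceOption_range_split β'.1 hmN, hfirst,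
      ← forget_eq_range hm]
  · have ha' : ∀ i ≥ m, α.1 i = none := fun i hi => stSpec α i (le_trans ha hi)
    have hst1 : (interleave α β').st ≤ 2 * N :=
      interleave_st_le α β' (le_trans ha hmN) hN
    have hst2 : (interleave α β).st ≤ 2 * m := interleave_st_le α β ha hm
    have hfirst2 : ((List.range (2 * m)).map (interleave α β').1)
        = ((List.range (2 * m)).map (interleave α β).1) := by
      apply List.map_congr_left
      intro i hi
      have hi' := List.mem_range.1 hi
      rcases Nat.even_or_odd i with ⟨t, ht⟩ | ⟨t, ht⟩
      · have : i = 2 * t := by omega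
        subst this
        rw [interleave_even, interleave_even]
      · have : i = 2 * t + 1 := by omega
        subst this
        rw [interleave_odd, interleave_odd, hpre t (by omega)]
    show (interleave α β').forget = (interleave α β).forget ++ _
    rw [forget_eq_range hst1, reduceOption_range_split (interleave α β').1
      (show 2 * m ≤ 2 * N by omega), hfirst2, ← forget_eq_range hst2]
    congr 1
    have : 2 * N - 2 * m = 2 * (N - m) := by omega
    rw [this, interleave_block2 α β' m ha']

theorem unbhd_decomp2 (kk : TreeKind) (β β' : PSeq B) (α : PSeq A) (k : ℕ)
    (hk : α.st ≤ k) (hmem : β' ∈ Unbhd (treeRel B kk) k β) :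
    ∃ w : List B, treeRel B kk [] w ∧ gMap (α, β') = gMap (α, β) ++ w.map Sum.inr := by
  obtain ⟨hpre, hrel⟩ := hmem
  set m := max k β.st with hm
  have h1 : β.st ≤ m := le_max_right _ _
  have h2 : α.st ≤ m := le_trans hk (le_max_left _ _)
  set N := max m β'.st with hN
  obtain ⟨hf, hg⟩ := split_main2 β β' α m N (fun i hi => (hpre i hi).symm) h1 h2
    (le_max_left _ _) (le_max_right _ _)
  set w := ((List.range (N - m)).map (fun t => β'.1 (m + t))).reduceOption with hw
  refine ⟨w, ?_, hg⟩
  rw [hf] at hrel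
  exact (treeRel_append_iff kk β.forget w).1 hrel

theorem unbhd_insert2 (kk : TreeKind) (β : PSeq B) (α : PSeq A) (k : ℕ) (w : List B)
    (hw : treeRel B kk [] w) :
    ∃ β', β' ∈ Unbhd (treeRel B kk) k β ∧ gMap (α, β') = gMap (α, β) ++ w.map Sum.inr := by
  classical
  set m₀ := max (max k β.st) α.st with hm₀
  have hβ : β.st ≤ m₀ := le_trans (le_max_right _ _) (le_max_left _ _)
  have hα : α.st ≤ m₀ := le_max_right _ _
  set f : ℕ → Option B := fun i => if i < m₀ then β.1 i else w[(i - m₀)]? with hf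
  have hnone : ∀ i ≥ m₀ + w.length, f i = none := by
    intro i hi
    rw [hf]
    dsimp only
    rw [if_neg (by omega)]
    exact List.getElem?_eq_none (by omega)
  set β' : PSeq B := ⟨f, m₀ + w.length, hnone⟩ with hβ'
  have hpre : ∀ i < m₀, β'.1 i = β.1 i := by
    intro i hi
    show f i = _
    rw [hf]
    exact if_pos hi
  have hst' : β'.st ≤ m₀ + w.length := stLe _ hnone
  obtain ⟨hfg, hg⟩ := split_main2 β β' α m₀ (m₀ + w.length) hpre hβ hα (by omega) hst'
  have htail : ((List.range (m₀ + w.length - m₀)).map (fun t => β'.1 (m₀ + t))).reduceOption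
      = w := by
    have h1 : m₀ + w.length - m₀ = w.length := by omega
    rw [h1]
    have h2 : ((List.range w.length).map (fun t => β'.1 (m₀ + t)))
        = (List.range w.length).map (fun t => w[t]?) := by
      apply List.map_congr_left
      intro t ht
      have ht' := List.mem_range.1 ht
      show f (m₀ + t) = _
      rw [hf]
      dsimp only
      rw [if_neg (by omega)]
      congr 1
      omega
    rw [h2]
    exact getElemQ_range_reduceOption w w.length le_rfl
  rw [htail] at hfg hg
  refine ⟨β', ⟨?_, ?_⟩, hg⟩
  · intro i hi
    have : i < m₀ := by
      have := le_trans (le_max_left k β.st) (le_max_left (max k β.st) α.st)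
      omega
    exact (hpre i this).symm
  · rw [hfg]
    exact (treeRel_append_iff kk β.forget w).2 hw

end Seq2

end S12
namespace S12

open MFormula

section Main

variable (φ₀ : MFormula 2) (LL : Set (MFormula 2))

/-- The finite set of relevant formulas. -/
def Sset : Finset (MFormula 2) := (subf φ₀).toFinset

theorem mem_Sset_self : φ₀ ∈ Sset φ₀ := by
  rw [Sset, List.mem_toFinset]; exact self_mem_subf φ₀

theorem mem_Sset_trans {ψ χ : MFormula 2} (h : ψ ∈ Sset φ₀) (h2 : χ ∈ subf ψ) :
    χ ∈ Sset φ₀ := by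
  rw [Sset, List.mem_toFinset] at *
  exact subf_trans h h2

theorem md_le_of_mem_Sset {ψ : MFormula 2} (h : ψ ∈ Sset φ₀) : md ψ ≤ md φ₀ := by
  rw [Sset, List.mem_toFinset] at h
  exact md_le_of_mem_subf h

/-- The characteristic conjunction of a type. -/
noncomputable def typeConj (u : Finset (MFormula 2)) : MFormula 2 :=
  conjL ((Sset φ₀).toList.map (fun ψ => if ψ ∈ u then ψ else ψ.neg))

/-- `L`-consistency of a type. -/
def Con (u : Finset (MFormula 2)) : Prop := (typeConj φ₀ u).neg ∉ LL

/-- Disjunction of all types. -/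
noncomputable def TYall : MFormula 2 :=
  disjL ((Sset φ₀).powerset.toList.map (typeConj φ₀))

open Classical in
/-- Disjunction of all consistent types. -/
noncomputable def TY : MFormula 2 :=
  disjL (((Sset φ₀).powerset.toList.filter
    (fun u => Con φ₀ LL u)).map (typeConj φ₀))

/-- Everywhere (up to the relevant depth), some consistent type holds. -/
noncomputable def Gf (i : Fin 2) : MFormula 2 :=
  conjL ((List.range (md φ₀ + 1)).map (fun d => boxIter i d (TY φ₀ LL)))

/-- The seed formula describing the root of a component with type `u`. -/
noncomputable def seedF (i : Fin 2) (u : Finset (MFormula 2)) : MFormula 2 :=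
  andF (typeConj φ₀ u) (Gf φ₀ LL i)

/-- A boolean valuation satisfies the characteristic conjunction of its own type. -/
theorem v_typeConj_self {v : MFormula 2 → Prop}
    (hb : ¬ v .bot) (hi : ∀ ψ χ : MFormula 2, v (ψ.imp χ) ↔ (v ψ → v χ)) :
    v (typeConj φ₀ (open Classical in (Sset φ₀).filter (fun ψ => v ψ))) := by
  classical
  rw [typeConj]
  refine (vconjL v hb hi _).2 ?_
  intro a ha
  obtain ⟨ψ, hψ, rfl⟩ := List.mem_map.1 ha
  by_cases hv : v ψ
  · rw [if_pos (Finset.mem_filter.2 ⟨(Finset.mem_toList).1 hψ, hv⟩)]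
    exact hv
  · rw [if_neg (fun hmem => hv (Finset.mem_filter.1 hmem).2)]
    exact (vneg v hb hi ψ).2 hv

theorem TYall_taut : IsTautology (TYall φ₀) := by
  intro v hb hi
  classical
  rw [TYall]
  refine (vdisjL v hb hi _).2 ?_
  refine ⟨typeConj φ₀ ((Sset φ₀).filter (fun ψ => v ψ)), List.mem_map.2 ⟨_, ?_, rfl⟩, ?_⟩
  · rw [Finset.mem_toList, Finset.mem_powerset]
    exact Finset.filter_subset _ _
  · exact v_typeConj_self φ₀ hb hi

variable {LL}

theorem TY_mem (hLL : IsNormalLogic LL) : TY φ₀ LL ∈ LL := by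
  classical
  have h1 : TYall φ₀ ∈ LL := hLL.taut _ (TYall_taut φ₀)
  have h2 := disj_filter_mem hLL (typeConj φ₀) (Con φ₀ LL) (Sset φ₀).powerset.toList
    (fun u _ hu => not_not.1 hu)
  exact hLL.mp _ _ h2 h1

theorem Gf_mem (hLL : IsNormalLogic LL) (i : Fin 2) : Gf φ₀ LL i ∈ LL := by
  refine conjL_mem hLL ?_
  intro a ha
  obtain ⟨d, _, rfl⟩ := List.mem_map.1 ha
  exact boxIter_mem hLL i d (TY_mem φ₀ hLL)

theorem seedF_con (hLL : IsNormalLogic LL) {u : Finset (MFormula 2)}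
    (hcon : Con φ₀ LL u) (i : Fin 2) : (seedF φ₀ LL i u).neg ∉ LL := by
  intro hmem
  refine hcon ?_
  refine taut_mp2 hLL ?_ hmem (Gf_mem φ₀ hLL i)
  intro v hb hi
  simp only [seedF, hi, vneg v hb hi, vand v hb hi]
  tauto

theorem con_bot_not_mem {u : Finset (MFormula 2)} (hLL : IsNormalLogic LL)
    (hu : u ⊆ Sset φ₀) (hcon : Con φ₀ LL u) : (MFormula.bot : MFormula 2) ∉ u := by
  intro hbot
  refine hcon (hLL.taut _ ?_)
  intro v hb hi
  rw [vneg v hb hi, typeConj]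
  intro hv
  have := (vconjL v hb hi _).1 hv _ (List.mem_map.2
    ⟨MFormula.bot, Finset.mem_toList.2 (hu hbot), rfl⟩)
  rw [if_pos hbot] at this
  exact hb this

theorem exists_t0 (hLL : IsNormalLogic LL) (h₀ : φ₀ ∉ LL) :
    ∃ u, u ⊆ Sset φ₀ ∧ Con φ₀ LL u ∧ φ₀ ∉ u := by
  classical
  by_contra hno
  push_neg at hno
  refine h₀ ?_
  set l := ((Sset φ₀).powerset.toList.filter (fun u => φ₀ ∉ u)).map
    (fun u => (typeConj φ₀ u).neg) with hl
  have htaut : IsTautology (listImp l φ₀) := by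
    intro v hb hi
    rw [vlistImp v hb hi]
    intro hall
    by_contra hv0
    set uv := (Sset φ₀).filter (fun ψ => v ψ) with huv
    have hmem : (typeConj φ₀ uv).neg ∈ l := by
      rw [hl]
      refine List.mem_map.2 ⟨uv, List.mem_filter.2 ⟨?_, ?_⟩, rfl⟩
      · rw [Finset.mem_toList, Finset.mem_powerset]; exact Finset.filter_subset _ _
      · simp only [decide_eq_true_eq]
        intro hmem
        exact hv0 (Finset.mem_filter.1 hmem).2
    have := (vneg v hb hi _).1 (hall _ hmem)
    exact this (v_typeConj_self φ₀ hb hi)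
  refine listImp_mp hLL (hLL.taut _ htaut) ?_
  intro a ha
  obtain ⟨u, hu, rfl⟩ := List.mem_map.1 ha
  have h2 := List.mem_filter.1 hu
  have h3 : u ⊆ Sset φ₀ := Finset.mem_powerset.1 (Finset.mem_toList.1 h2.1)
  have h4 : φ₀ ∉ u := by simpa using h2.2
  by_contra hcon
  exact h4 (hno u h3 hcon)

end Main

end S12
namespace S12

open MFormula

section Models

variable {LL : Set (MFormula 2)} (φ₀ : MFormula 2)

theorem ksat_andF {n : ℕ} {W : Type} (R : Fin n → W → W → Prop) (V : ℕ → Set W) (x : W)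
    (a b : MFormula n) : kSat R V x (andF a b) ↔ (kSat R V x a ∧ kSat R V x b) :=
  vand _ (ksat_bot R V x) (ksat_imp R V x) a b

/-- Faithfulness of the reduction. -/
theorem red_not_mem_KLog (hLL : IsNormalLogic LL) (i : Fin 2) {W : Type} [Nonempty W]
    (R : W → W → Prop) (hL : ∀ a ∈ KLog R, trTo i a ∈ LL)
    {χ : MFormula 2} (h : χ ∉ LL) : red i χ ∉ KLog R := by
  intro hmem
  refine h ?_
  have h2 := hLL.subst _ backSub (hL _ hmem)
  rwa [backSub_red] at h2

/-- A seed formula of a consistent type is satisfiable at the root of the tree. -/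
theorem seed_sat_root {A : Type} (kk : TreeKind) (hLL : IsNormalLogic LL) (i : Fin 2)
    (hL : ∀ a ∈ KLog (treeRel A kk), trTo i a ∈ LL)
    {u : Finset (MFormula 2)} (hcon : Con φ₀ LL u) :
    ∃ V : ℕ → Set (List A),
      kSat (fun _ : Fin 1 => treeRel A kk) V [] (red i (seedF φ₀ LL i u)) := by
  have hnot := red_not_mem_KLog hLL i (treeRel A kk) hL
    (seedF_con φ₀ hLL hcon i)
  rw [KLog, KLogn] at hnot
  simp only [Set.mem_setOf_eq, not_forall] at hnot
  obtain ⟨V, w, hw⟩ := hnot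
  rw [red_neg, ksat_neg, not_not] at hw
  refine ⟨fun p => {z | w ++ z ∈ V p}, ?_⟩
  have := (ksat_transplant kk V w (red i (seedF φ₀ LL i u)) []).2 (by simpa using hw)
  exact this

open Classical in
noncomputable def chooseV (A : Type) (kk : TreeKind) (i : Fin 2)
    (LL : Set (MFormula 2)) (u : Finset (MFormula 2)) : ℕ → Set (List A) :=
  if h : ∃ V : ℕ → Set (List A),
      kSat (fun _ : Fin 1 => treeRel A kk) V [] (red i (seedF φ₀ LL i u))
  then h.choose else fun _ => ∅

theorem chooseV_spec {A : Type} (kk : TreeKind) (hLL : IsNormalLogic LL) (i : Fin 2)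
    (hL : ∀ a ∈ KLog (treeRel A kk), trTo i a ∈ LL)
    {u : Finset (MFormula 2)} (hcon : Con φ₀ LL u) :
    kSat (fun _ : Fin 1 => treeRel A kk) (chooseV φ₀ A kk i LL u) []
      (red i (seedF φ₀ LL i u)) := by
  have hex := seed_sat_root φ₀ kk hLL i hL hcon
  rw [chooseV, dif_pos hex]
  exact hex.choose_spec

open Classical in
noncomputable def typeIn (A : Type) (kk : TreeKind) (i : Fin 2)
    (V : ℕ → Set (List A)) (z : List A) : Finset (MFormula 2) :=
  (Sset φ₀).filter (fun ψ => kSat (fun _ : Fin 1 => treeRel A kk) V z (red i ψ))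

theorem mem_typeIn {A : Type} {kk : TreeKind} {i : Fin 2}
    {V : ℕ → Set (List A)} {z : List A} {ψ : MFormula 2} :
    ψ ∈ typeIn φ₀ A kk i V z ↔
      (ψ ∈ Sset φ₀ ∧ kSat (fun _ : Fin 1 => treeRel A kk) V z (red i ψ)) := by
  classical
  unfold typeIn
  exact Finset.mem_filter

theorem typeIn_subset {A : Type} (kk : TreeKind) (i : Fin 2)
    (V : ℕ → Set (List A)) (z : List A) : typeIn φ₀ A kk i V z ⊆ Sset φ₀ :=
  fun _ hx => ((mem_typeIn φ₀).1 hx).1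

/-- Agreement: a point satisfying the reduct of a type's conjunction has that type. -/
theorem typeIn_eq_of_sat {A : Type} {kk : TreeKind} {i : Fin 2}
    {V : ℕ → Set (List A)} {z : List A} {u : Finset (MFormula 2)} (hu : u ⊆ Sset φ₀)
    (hsat : kSat (fun _ : Fin 1 => treeRel A kk) V z (red i (typeConj φ₀ u))) :
    typeIn φ₀ A kk i V z = u := by
  classical
  rw [typeConj, red_conjL] at hsat
  have hall : ∀ ψ ∈ (Sset φ₀).toList,
      kSat (fun _ : Fin 1 => treeRel A kk) V z (red i (if ψ ∈ u then ψ else ψ.neg)) := by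
    intro ψ hψ
    refine (ksat_conjL _ _ _ _).1 hsat _ ?_
    rw [List.map_map]
    exact List.mem_map.2 ⟨ψ, hψ, rfl⟩
  ext ψ
  rw [mem_typeIn]
  by_cases hψS : ψ ∈ Sset φ₀
  · have h := hall ψ (Finset.mem_toList.2 hψS)
    by_cases hψu : ψ ∈ u
    · rw [if_pos hψu] at h
      exact ⟨fun _ => hψu, fun _ => ⟨hψS, h⟩⟩
    · rw [if_neg hψu, red_neg, ksat_neg] at h
      exact ⟨fun hh => absurd hh.2 h, fun hh => absurd hh hψu⟩
  · exact ⟨fun hh => absurd hh.1 hψS, fun hh => absurd (hu hh) hψS⟩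

/-- The root of a seeded component model has exactly the seed type. -/
theorem typeIn_chooseV_root {A : Type} (kk : TreeKind) (hLL : IsNormalLogic LL) (i : Fin 2)
    (hL : ∀ a ∈ KLog (treeRel A kk), trTo i a ∈ LL)
    {u : Finset (MFormula 2)} (hcon : Con φ₀ LL u) (hu : u ⊆ Sset φ₀) :
    typeIn φ₀ A kk i (chooseV φ₀ A kk i LL u) [] = u := by
  have hsp := chooseV_spec φ₀ kk hLL i hL hcon
  rw [seedF, red_andF, ksat_andF] at hsp
  exact typeIn_eq_of_sat φ₀ hu hsp.1

/-- Coverage: every point of a seeded component model reachable in at most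
`md φ₀` steps carries a consistent type. -/
theorem typeIn_chooseV_con {A : Type} (kk : TreeKind) (hLL : IsNormalLogic LL) (i : Fin 2)
    (hL : ∀ a ∈ KLog (treeRel A kk), trTo i a ∈ LL)
    {u : Finset (MFormula 2)} (hcon : Con φ₀ LL u)
    {z : List A} {d : ℕ} (hd : d ≤ md φ₀) (hpow : powR (treeRel A kk) d [] z) :
    Con φ₀ LL (typeIn φ₀ A kk i (chooseV φ₀ A kk i LL u) z) := by
  classical
  have hsp := chooseV_spec φ₀ kk hLL i hL hcon
  rw [seedF, red_andF, ksat_andF] at hsp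
  have hG := hsp.2
  rw [Gf, red_conjL] at hG
  have hb := (ksat_conjL _ _ _ _).1 hG (boxIter 0 d (red i (TY φ₀ LL))) ?_
  · have hTY := (ksat_boxIter _ _ _ _ _ _).1 hb z hpow
    rw [TY, red_disjL] at hTY
    obtain ⟨a, ha, hsata⟩ := (ksat_disjL _ _ _ _).1 hTY
    rw [List.map_map] at ha
    obtain ⟨u₀, hu₀, rfl⟩ := List.mem_map.1 ha
    have h2 := List.mem_filter.1 hu₀
    have hu₀S : u₀ ⊆ Sset φ₀ := Finset.mem_powerset.1 (Finset.mem_toList.1 h2.1)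
    have hcon₀ : Con φ₀ LL u₀ := by simpa using h2.2
    rw [typeIn_eq_of_sat φ₀ hu₀S hsata]
    exact hcon₀
  · rw [List.map_map]
    refine List.mem_map.2 ⟨d, List.mem_range.2 (by omega), ?_⟩
    simp only [Function.comp]
    rw [red_boxIter]

/-- Boolean coherence of the types carried by points of component models. -/
theorem typeIn_imp_iff {A : Type} {kk : TreeKind} {i : Fin 2}
    {V : ℕ → Set (List A)} {z : List A} {a b : MFormula 2}
    (ha : a ∈ Sset φ₀) (hb : b ∈ Sset φ₀) :
    a.imp b ∈ typeIn φ₀ A kk i V z ↔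
      (a.imp b ∈ Sset φ₀ ∧ (a ∈ typeIn φ₀ A kk i V z → b ∈ typeIn φ₀ A kk i V z)) := by
  rw [mem_typeIn, mem_typeIn, mem_typeIn]
  have : red i (a.imp b) = (red i a).imp (red i b) := rfl
  rw [this, ksat_imp]
  tauto

theorem bot_not_mem_typeIn {A : Type} {kk : TreeKind} {i : Fin 2}
    {V : ℕ → Set (List A)} {z : List A} :
    (MFormula.bot : MFormula 2) ∉ typeIn φ₀ A kk i V z := by
  rw [mem_typeIn]
  rintro ⟨-, h⟩
  exact h

end Models

end S12
namespace S12

open MFormula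

section Delta

/-! ### takeWhile/dropWhile helpers -/

theorem takeWhile_append_all {γ : Type} (p : γ → Bool) (l₁ l₂ : List γ)
    (h : ∀ x ∈ l₁, p x = true) : (l₁ ++ l₂).takeWhile p = l₁ ++ l₂.takeWhile p := by
  induction l₁ with
  | nil => simp
  | cons a l ih =>
    rw [List.cons_append, List.takeWhile_cons_of_pos (h a (by simp)), List.cons_append,
      ih (fun x hx => h x (by simp [hx]))]

theorem dropWhile_append_all {γ : Type} (p : γ → Bool) (l₁ l₂ : List γ)
    (h : ∀ x ∈ l₁, p x = true) : (l₁ ++ l₂).dropWhile p = l₂.dropWhile p := by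
  induction l₁ with
  | nil => simp
  | cons a l ih =>
    rw [List.cons_append, List.dropWhile_cons_of_pos (h a (by simp)),
      ih (fun x hx => h x (by simp [hx]))]

theorem takeWhile_eq_nil_of_head {γ : Type} (p : γ → Bool) (l : List γ)
    (h : ∀ c, l.head? = some c → p c = false) : l.takeWhile p = [] := by
  cases l with
  | nil => rfl
  | cons a l => exact List.takeWhile_cons_of_neg (by simp [h a rfl])

theorem dropWhile_eq_self_of_head {γ : Type} (p : γ → Bool) (l : List γ)
    (h : ∀ c, l.head? = some c → p c = false) : l.dropWhile p = l := by
  cases l with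
  | nil => rfl
  | cons a l => exact List.dropWhile_cons_of_neg (by simp [h a rfl])

variable (A B : Type)

/-- `u` does not end with an `inl` letter. -/
def noL (r : List (A ⊕ B)) : Prop :=
  ∀ c, r.reverse.head? = some c → c.isRight = true

/-- `u` does not end with an `inr` letter. -/
def noR (r : List (A ⊕ B)) : Prop :=
  ∀ c, r.reverse.head? = some c → c.isLeft = true

theorem noL_nil : noL A B [] := by intro c hc; simp at hc

theorem noR_nil : noR A B [] := by intro c hc; simp at hc

theorem noL_inr_append (r : List (A ⊕ B)) (z : List B) (hz : z ≠ []) :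
    noL A B (r ++ z.map Sum.inr) := by
  intro c hc
  obtain ⟨b, zr, hzr⟩ : ∃ b zr, z.reverse = b :: zr := by
    cases h : z.reverse with
    | nil => exact absurd (by simpa using congrArg List.reverse h) hz
    | cons b zr => exact ⟨b, zr, rfl⟩
  rw [List.reverse_append, ← List.map_reverse, hzr] at hc
  simp at hc
  rw [← hc]
  rfl

theorem noR_inl_append (r : List (A ⊕ B)) (z : List A) (hz : z ≠ []) :
    noR A B (r ++ z.map Sum.inl) := by
  intro c hc
  obtain ⟨b, zr, hzr⟩ : ∃ b zr, z.reverse = b :: zr := by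
    cases h : z.reverse with
    | nil => exact absurd (by simpa using congrArg List.reverse h) hz
    | cons b zr => exact ⟨b, zr, rfl⟩
  rw [List.reverse_append, ← List.map_reverse, hzr] at hc
  simp at hc
  rw [← hc]
  rfl

variable (k₁ k₂ : TreeKind) (φ₀ : MFormula 2) (LL : Set (MFormula 2))
  (t₀ : Finset (MFormula 2))

/-- The type assignment, on reversed sequences. -/
noncomputable def deltaRev : List (A ⊕ B) → Finset (MFormula 2)
  | [] => t₀
  | Sum.inl a :: rest =>
      typeIn φ₀ A k₁ 0
        (chooseV φ₀ A k₁ 0 LL (deltaRev ((Sum.inl a :: rest).dropWhile Sum.isLeft)))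
        (((Sum.inl a :: rest).takeWhile Sum.isLeft).filterMap Sum.getLeft?).reverse
  | Sum.inr b :: rest =>
      typeIn φ₀ B k₂ 1
        (chooseV φ₀ B k₂ 1 LL (deltaRev ((Sum.inr b :: rest).dropWhile Sum.isRight)))
        (((Sum.inr b :: rest).takeWhile Sum.isRight).filterMap Sum.getRight?).reverse
  termination_by l => l.length
  decreasing_by
  · rw [List.dropWhile_cons_of_pos (by rfl)]
    have h := (List.dropWhile_sublist (l := rest) (p := Sum.isLeft)).length_le
    simp only [List.length_cons]
    omega
  · rw [List.dropWhile_cons_of_pos (by rfl)]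
    have h := (List.dropWhile_sublist (l := rest) (p := Sum.isRight)).length_le
    simp only [List.length_cons]
    omega

/-- The type assignment on the bimodal tree. -/
noncomputable def delta (u : List (A ⊕ B)) : Finset (MFormula 2) :=
  deltaRev A B k₁ k₂ φ₀ LL t₀ u.reverse

theorem delta_nil : delta A B k₁ k₂ φ₀ LL t₀ [] = t₀ := by
  rw [delta, List.reverse_nil, deltaRev]

theorem delta_left (r : List (A ⊕ B)) (z : List A) (hz : z ≠ []) (hr : noL A B r) :
    delta A B k₁ k₂ φ₀ LL t₀ (r ++ z.map Sum.inl) =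
      typeIn φ₀ A k₁ 0 (chooseV φ₀ A k₁ 0 LL (delta A B k₁ k₂ φ₀ LL t₀ r)) z := by
  obtain ⟨a, zr, hzr⟩ : ∃ a zr, z.reverse = a :: zr := by
    cases h : z.reverse with
    | nil => exact absurd (by simpa using congrArg List.reverse h) hz
    | cons a zr => exact ⟨a, zr, rfl⟩
  have hrev : (r ++ z.map Sum.inl).reverse = Sum.inl a :: (zr.map Sum.inl ++ r.reverse) := by
    rw [List.reverse_append, ← List.map_reverse, hzr]
    simp
  have hall : ∀ x ∈ (z.reverse.map Sum.inl : List (A ⊕ B)), Sum.isLeft x = true := by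
    intro x hx
    obtain ⟨y, _, rfl⟩ := List.mem_map.1 hx
    rfl
  have hr' : ∀ c, (r.reverse : List (A ⊕ B)).head? = some c → Sum.isLeft c = false := by
    intro c hc
    have := hr c hc
    cases c with
    | inl a => simp at this
    | inr b => rfl
  have hcons : Sum.inl a :: (zr.map Sum.inl ++ r.reverse)
      = (z.reverse.map Sum.inl ++ r.reverse : List (A ⊕ B)) := by
    rw [hzr]; simp
  rw [delta, hrev]
  rw [deltaRev, hcons]
  rw [takeWhile_append_all _ _ _ hall, dropWhile_append_all _ _ _ hall,
    takeWhile_eq_nil_of_head _ _ hr', dropWhile_eq_self_of_head _ _ hr']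
  rw [List.append_nil]
  have hfm : (((z.reverse.map Sum.inl : List (A ⊕ B)).filterMap
      (fun s => s.getLeft?)).reverse : List A) = z := by
    rw [List.filterMap_map]
    have he : ((fun s : A ⊕ B => s.getLeft?) ∘ Sum.inl) = fun x : A => some x := rfl
    rw [he, List.filterMap_some, List.reverse_reverse]
  rw [hfm]
  rfl

theorem delta_right (r : List (A ⊕ B)) (z : List B) (hz : z ≠ []) (hr : noR A B r) :
    delta A B k₁ k₂ φ₀ LL t₀ (r ++ z.map Sum.inr) =
      typeIn φ₀ B k₂ 1 (chooseV φ₀ B k₂ 1 LL (delta A B k₁ k₂ φ₀ LL t₀ r)) z := by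
  obtain ⟨a, zr, hzr⟩ : ∃ a zr, z.reverse = a :: zr := by
    cases h : z.reverse with
    | nil => exact absurd (by simpa using congrArg List.reverse h) hz
    | cons a zr => exact ⟨a, zr, rfl⟩
  have hrev : (r ++ z.map Sum.inr).reverse = Sum.inr a :: (zr.map Sum.inr ++ r.reverse) := by
    rw [List.reverse_append, ← List.map_reverse, hzr]
    simp
  have hall : ∀ x ∈ (z.reverse.map Sum.inr : List (A ⊕ B)), Sum.isRight x = true := by
    intro x hx
    obtain ⟨y, _, rfl⟩ := List.mem_map.1 hx
    rfl
  have hr' : ∀ c, (r.reverse : List (A ⊕ B)).head? = some c → Sum.isRight c = false := by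
    intro c hc
    have := hr c hc
    cases c with
    | inl a => rfl
    | inr b => simp at this
  have hcons : Sum.inr a :: (zr.map Sum.inr ++ r.reverse)
      = (z.reverse.map Sum.inr ++ r.reverse : List (A ⊕ B)) := by
    rw [hzr]; simp
  rw [delta, hrev]
  rw [deltaRev, hcons]
  rw [takeWhile_append_all _ _ _ hall, dropWhile_append_all _ _ _ hall,
    takeWhile_eq_nil_of_head _ _ hr', dropWhile_eq_self_of_head _ _ hr']
  rw [List.append_nil]
  have hfm : (((z.reverse.map Sum.inr : List (A ⊕ B)).filterMap
      (fun s => s.getRight?)).reverse : List B) = z := by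
    rw [List.filterMap_map]
    have he : ((fun s : A ⊕ B => s.getRight?) ∘ Sum.inr) = fun x : B => some x := rfl
    rw [he, List.filterMap_some, List.reverse_reverse]
  rw [hfm]
  rfl

/-- The reachability/budget invariant for nodes of the bimodal tree. -/
inductive Inv : ℕ → List (A ⊕ B) → Prop
  | nil (m : ℕ) : Inv m []
  | left {r : List (A ⊕ B)} {z : List A} {m m' d : ℕ} :
      noL A B r → z ≠ [] → powR (treeRel A k₁) d [] z → d + m ≤ md φ₀ → m < m' →
      Inv m' r → Inv m (r ++ z.map Sum.inl)
  | right {r : List (A ⊕ B)} {z : List B} {m m' d : ℕ} :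
      noR A B r → z ≠ [] → powR (treeRel B k₂) d [] z → d + m ≤ md φ₀ → m < m' →
      Inv m' r → Inv m (r ++ z.map Sum.inr)

theorem Inv_mono {m u} (h : Inv A B k₁ k₂ φ₀ m u) {m'' : ℕ} (hm : m'' ≤ m) :
    Inv A B k₁ k₂ φ₀ m'' u := by
  cases h with
  | nil => exact Inv.nil _
  | left hr hz hpow hd hm' h => exact Inv.left hr hz hpow (by omega) (by omega) h
  | right hr hz hpow hd hm' h => exact Inv.right hr hz hpow (by omega) (by omega) h

variable {LL}

theorem Inv_con (hLL : IsNormalLogic LL)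
    (hL1 : ∀ a ∈ KLog (treeRel A k₁), trTo 0 a ∈ LL)
    (hL2 : ∀ a ∈ KLog (treeRel B k₂), trTo 1 a ∈ LL)
    (ht₀ : Con φ₀ LL t₀) :
    ∀ {m u}, Inv A B k₁ k₂ φ₀ m u → Con φ₀ LL (delta A B k₁ k₂ φ₀ LL t₀ u) := by
  intro m u h
  induction h with
  | nil => rw [delta_nil]; exact ht₀
  | left hr hz hpow hd hm h ih =>
    rw [delta_left A B k₁ k₂ φ₀ LL t₀ _ _ hz hr]
    exact typeIn_chooseV_con φ₀ k₁ hLL 0 hL1 ih (by omega) hpow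
  | right hr hz hpow hd hm h ih =>
    rw [delta_right A B k₁ k₂ φ₀ LL t₀ _ _ hz hr]
    exact typeIn_chooseV_con φ₀ k₂ hLL 1 hL2 ih (by omega) hpow

theorem Inv_subS (ht₀ : t₀ ⊆ Sset φ₀) :
    ∀ {m u}, Inv A B k₁ k₂ φ₀ m u → delta A B k₁ k₂ φ₀ LL t₀ u ⊆ Sset φ₀ := by
  intro m u h
  cases h with
  | nil => rw [delta_nil]; exact ht₀
  | left hr hz hpow hd hm h =>
    rw [delta_left A B k₁ k₂ φ₀ LL t₀ _ _ hz hr]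
    exact typeIn_subset φ₀ _ _ _ _
  | right hr hz hpow hd hm h =>
    rw [delta_right A B k₁ k₂ φ₀ LL t₀ _ _ hz hr]
    exact typeIn_subset φ₀ _ _ _ _

theorem Inv_noL_or {m u} (h : Inv A B k₁ k₂ φ₀ m u) :
    noL A B u ∨ ∃ r z m' d, u = r ++ z.map Sum.inl ∧ noL A B r ∧ z ≠ [] ∧
      powR (treeRel A k₁) d [] z ∧ d + m ≤ md φ₀ ∧ m < m' ∧ Inv A B k₁ k₂ φ₀ m' r := by
  cases h with
  | nil => exact Or.inl (noL_nil A B)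
  | left hr hz hpow hd hm h =>
    exact Or.inr ⟨_, _, _, _, rfl, hr, hz, hpow, hd, hm, h⟩
  | right hr hz hpow hd hm h =>
    exact Or.inl (noL_inr_append A B _ _ hz)

theorem Inv_noR_or {m u} (h : Inv A B k₁ k₂ φ₀ m u) :
    noR A B u ∨ ∃ r z m' d, u = r ++ z.map Sum.inr ∧ noR A B r ∧ z ≠ [] ∧
      powR (treeRel B k₂) d [] z ∧ d + m ≤ md φ₀ ∧ m < m' ∧ Inv A B k₁ k₂ φ₀ m' r := by
  cases h with
  | nil => exact Or.inl (noR_nil A B)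
  | right hr hz hpow hd hm h =>
    exact Or.inr ⟨_, _, _, _, rfl, hr, hz, hpow, hd, hm, h⟩
  | left hr hz hpow hd hm h =>
    exact Or.inl (noR_inl_append A B _ _ hz)

end Delta

end S12
namespace S12

open MFormula

theorem powR_snoc {W : Type} {R : W → W → Prop} :
    ∀ {d : ℕ} {x y z : W}, powR R d x y → R y z → powR R (d + 1) x z := by
  intro d
  induction d with
  | zero =>
    rintro x y z rfl h
    exact ⟨z, h, rfl⟩
  | succ d ih =>
    rintro x y z ⟨w, hw, hp⟩ h
    exact ⟨w, hw, ih hp h⟩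

section Truth

variable {A B : Type} (k₁ k₂ : TreeKind) (φ₀ : MFormula 2) (LL : Set (MFormula 2))
  (t₀ : Finset (MFormula 2))

noncomputable def tauP : Fin 2 → (PSeq A × PSeq B) → Filter (PSeq A × PSeq B) :=
  ![prodTau1 (nOmega (treeRel A k₁)), prodTau2 (nOmega (treeRel B k₂))]

noncomputable def Vfin : ℕ → Set (PSeq A × PSeq B) :=
  fun p => {q | MFormula.prop p ∈ delta A B k₁ k₂ φ₀ LL t₀ (gMap q)}

theorem red_box_self (i : Fin 2) (a : MFormula 2) :
    red i (MFormula.box i a) = MFormula.box 0 (red i a) := by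
  simp [red]

theorem core1 (χ : MFormula 2) (hχS : χ ∈ Sset φ₀)
    (α : PSeq A) (β : PSeq B) (r : List (A ⊕ B)) (z : List A) (m : ℕ)
    (hg : gMap (α, β) = r ++ z.map Sum.inl)
    {M : ℕ → Set (List A)}
    (Hδ : ∀ w, treeRel A k₁ [] w →
      delta A B k₁ k₂ φ₀ LL t₀ (r ++ (z ++ w).map Sum.inl) = typeIn φ₀ A k₁ 0 M (z ++ w))
    (Hbox : MFormula.box 0 χ ∈ delta A B k₁ k₂ φ₀ LL t₀ (gMap (α, β)) ↔
      kSat (fun _ : Fin 1 => treeRel A k₁) M z (MFormula.box 0 (red 0 χ)))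
    (HInv : ∀ w, treeRel A k₁ [] w → Inv A B k₁ k₂ φ₀ m (r ++ (z ++ w).map Sum.inl))
    (IH : ∀ q, Inv A B k₁ k₂ φ₀ m (gMap q) →
      (nSat (tauP k₁ k₂) (Vfin k₁ k₂ φ₀ LL t₀) q χ ↔
        χ ∈ delta A B k₁ k₂ φ₀ LL t₀ (gMap q))) :
    nSat (tauP k₁ k₂) (Vfin k₁ k₂ φ₀ LL t₀) (α, β) (MFormula.box 0 χ) ↔
      MFormula.box 0 χ ∈ delta A B k₁ k₂ φ₀ LL t₀ (gMap (α, β)) := by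
  classical
  have hbox_val : nSat (tauP k₁ k₂) (Vfin k₁ k₂ φ₀ LL t₀) (α, β) (MFormula.box 0 χ) ↔
      {q | nSat (tauP k₁ k₂) (Vfin k₁ k₂ φ₀ LL t₀) q χ} ∈
        prodTau1 (nOmega (treeRel A k₁)) (α, β) := by
    show ({q | nSat (tauP k₁ k₂) (Vfin k₁ k₂ φ₀ LL t₀) q χ} ∈
      tauP k₁ k₂ (0 : Fin 2) (α, β)) ↔ _
    simp only [tauP, Matrix.cons_val_zero]
  rw [hbox_val, mem_prodTau1]
  constructor
  · rintro ⟨k, hk⟩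
    by_contra hnδ
    rw [Hbox] at hnδ
    have hex : ∃ y, treeRel A k₁ z y ∧
        ¬ kSat (fun _ : Fin 1 => treeRel A k₁) M y (red 0 χ) := by
      by_contra hall
      push_neg at hall
      exact hnδ (fun y hy => hall y hy)
    obtain ⟨y, hy, hny⟩ := hex
    obtain ⟨w, rfl, hw⟩ := treeRel_decomp hy
    obtain ⟨α', hα'mem, hα'g⟩ := unbhd_insert k₁ α β k w hw
    have h1 := hk α' hα'mem
    have hgq' : gMap (α', β) = r ++ (z ++ w).map Sum.inl := by
      rw [hα'g, hg, List.map_append, List.append_assoc]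
    have h2 := (IH (α', β) (by rw [hgq']; exact HInv w hw)).1 h1
    rw [hgq', Hδ w hw, mem_typeIn] at h2
    exact hny h2.2
  · intro hδ
    refine ⟨β.st, ?_⟩
    intro α' hα'
    obtain ⟨w, hw, hα'g⟩ := unbhd_decomp k₁ α α' β β.st le_rfl hα'
    have hgq' : gMap (α', β) = r ++ (z ++ w).map Sum.inl := by
      rw [hα'g, hg, List.map_append, List.append_assoc]
    have hsat := (Hbox.1 hδ) (z ++ w) ((treeRel_append_iff k₁ z w).2 hw)
    have hmem : χ ∈ delta A B k₁ k₂ φ₀ LL t₀ (gMap (α', β)) := by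
      rw [hgq', Hδ w hw, mem_typeIn]
      exact ⟨hχS, hsat⟩
    exact (IH (α', β) (by rw [hgq']; exact HInv w hw)).2 hmem

theorem core2 (χ : MFormula 2) (hχS : χ ∈ Sset φ₀)
    (α : PSeq A) (β : PSeq B) (r : List (A ⊕ B)) (z : List B) (m : ℕ)
    (hg : gMap (α, β) = r ++ z.map Sum.inr)
    {M : ℕ → Set (List B)}
    (Hδ : ∀ w, treeRel B k₂ [] w →
      delta A B k₁ k₂ φ₀ LL t₀ (r ++ (z ++ w).map Sum.inr) = typeIn φ₀ B k₂ 1 M (z ++ w))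
    (Hbox : MFormula.box 1 χ ∈ delta A B k₁ k₂ φ₀ LL t₀ (gMap (α, β)) ↔
      kSat (fun _ : Fin 1 => treeRel B k₂) M z (MFormula.box 0 (red 1 χ)))
    (HInv : ∀ w, treeRel B k₂ [] w → Inv A B k₁ k₂ φ₀ m (r ++ (z ++ w).map Sum.inr))
    (IH : ∀ q, Inv A B k₁ k₂ φ₀ m (gMap q) →
      (nSat (tauP k₁ k₂) (Vfin k₁ k₂ φ₀ LL t₀) q χ ↔
        χ ∈ delta A B k₁ k₂ φ₀ LL t₀ (gMap q))) :
    nSat (tauP k₁ k₂) (Vfin k₁ k₂ φ₀ LL t₀) (α, β) (MFormula.box 1 χ) ↔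
      MFormula.box 1 χ ∈ delta A B k₁ k₂ φ₀ LL t₀ (gMap (α, β)) := by
  classical
  have hbox_val : nSat (tauP k₁ k₂) (Vfin k₁ k₂ φ₀ LL t₀) (α, β) (MFormula.box 1 χ) ↔
      {q | nSat (tauP k₁ k₂) (Vfin k₁ k₂ φ₀ LL t₀) q χ} ∈
        prodTau2 (nOmega (treeRel B k₂)) (α, β) := by
    show ({q | nSat (tauP k₁ k₂) (Vfin k₁ k₂ φ₀ LL t₀) q χ} ∈
      tauP k₁ k₂ (1 : Fin 2) (α, β)) ↔ _
    simp only [tauP, Matrix.cons_val_one, Matrix.head_cons, Matrix.cons_val_zero]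
  rw [hbox_val, mem_prodTau2]
  constructor
  · rintro ⟨k, hk⟩
    by_contra hnδ
    rw [Hbox] at hnδ
    have hex : ∃ y, treeRel B k₂ z y ∧
        ¬ kSat (fun _ : Fin 1 => treeRel B k₂) M y (red 1 χ) := by
      by_contra hall
      push_neg at hall
      exact hnδ (fun y hy => hall y hy)
    obtain ⟨y, hy, hny⟩ := hex
    obtain ⟨w, rfl, hw⟩ := treeRel_decomp hy
    obtain ⟨β', hβ'mem, hβ'g⟩ := unbhd_insert2 k₂ β α k w hw
    have h1 := hk β' hβ'mem
    have hgq' : gMap (α, β') = r ++ (z ++ w).map Sum.inr := by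
      rw [hβ'g, hg, List.map_append, List.append_assoc]
    have h2 := (IH (α, β') (by rw [hgq']; exact HInv w hw)).1 h1
    rw [hgq', Hδ w hw, mem_typeIn] at h2
    exact hny h2.2
  · intro hδ
    refine ⟨α.st, ?_⟩
    intro β' hβ'
    obtain ⟨w, hw, hβ'g⟩ := unbhd_decomp2 k₂ β β' α α.st le_rfl hβ'
    have hgq' : gMap (α, β') = r ++ (z ++ w).map Sum.inr := by
      rw [hβ'g, hg, List.map_append, List.append_assoc]
    have hsat := (Hbox.1 hδ) (z ++ w) ((treeRel_append_iff k₂ z w).2 hw)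
    have hmem : χ ∈ delta A B k₁ k₂ φ₀ LL t₀ (gMap (α, β')) := by
      rw [hgq', Hδ w hw, mem_typeIn]
      exact ⟨hχS, hsat⟩
    exact (IH (α, β') (by rw [hgq']; exact HInv w hw)).2 hmem

variable {LL}

/-- The truth lemma. -/
theorem truth (hLL : IsNormalLogic LL)
    (hL1 : ∀ a ∈ KLog (treeRel A k₁), trTo 0 a ∈ LL)
    (hL2 : ∀ a ∈ KLog (treeRel B k₂), trTo 1 a ∈ LL)
    (ht₀con : Con φ₀ LL t₀) (ht₀S : t₀ ⊆ Sset φ₀) :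
    ∀ (ψ : MFormula 2), ψ ∈ Sset φ₀ → ∀ m : ℕ, md ψ ≤ m → m ≤ md φ₀ →
      ∀ q : PSeq A × PSeq B, Inv A B k₁ k₂ φ₀ m (gMap q) →
      (nSat (tauP k₁ k₂) (Vfin k₁ k₂ φ₀ LL t₀) q ψ ↔
        ψ ∈ delta A B k₁ k₂ φ₀ LL t₀ (gMap q)) := by
  intro ψ
  induction ψ with
  | prop p =>
    intro _ m _ _ q _
    exact Iff.rfl
  | bot =>
    intro _ m _ _ q hinv
    refine iff_of_false (fun h => h) ?_
    intro hmem
    exact con_bot_not_mem φ₀ hLL (Inv_subS (LL := LL) A B k₁ k₂ φ₀ t₀ ht₀S hinv)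
      (Inv_con A B k₁ k₂ φ₀ t₀ hLL hL1 hL2 ht₀con hinv) hmem
  | imp a b iha ihb =>
    intro hS m hmd hmD q hinv
    have haS : a ∈ Sset φ₀ := mem_Sset_trans φ₀ hS
      (List.mem_cons.2 (Or.inr (List.mem_append.2 (Or.inl (self_mem_subf a)))))
    have hbS : b ∈ Sset φ₀ := mem_Sset_trans φ₀ hS
      (List.mem_cons.2 (Or.inr (List.mem_append.2 (Or.inr (self_mem_subf b)))))
    have hmda : md a ≤ m := le_trans (le_max_left _ _) hmd
    have hmdb : md b ≤ m := le_trans (le_max_right _ _) hmd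
    have h1 := iha haS m hmda hmD q hinv
    have h2 := ihb hbS m hmdb hmD q hinv
    have hcoh : ∀ u, Inv A B k₁ k₂ φ₀ m u →
        (a.imp b ∈ delta A B k₁ k₂ φ₀ LL t₀ u ↔
        (a ∈ delta A B k₁ k₂ φ₀ LL t₀ u →
          b ∈ delta A B k₁ k₂ φ₀ LL t₀ u)) := by
      intro u hu
      cases hu with
      | nil =>
        rw [delta_nil,
          ← typeIn_chooseV_root φ₀ k₁ hLL 0 hL1 ht₀con ht₀S,
          typeIn_imp_iff φ₀ haS hbS]
        have hS' : a.imp b ∈ Sset φ₀ := hS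
        tauto
      | left hr hz hpow hd hm h =>
        rw [delta_left A B k₁ k₂ φ₀ LL t₀ _ _ hz hr, typeIn_imp_iff φ₀ haS hbS]
        tauto
      | right hr hz hpow hd hm h =>
        rw [delta_right A B k₁ k₂ φ₀ LL t₀ _ _ hz hr, typeIn_imp_iff φ₀ haS hbS]
        tauto
    show (nSat _ _ q a → nSat _ _ q b) ↔ _
    rw [h1, h2, hcoh (gMap q) hinv]
  | box i χ ih =>
    intro hS m hmd hmD q hinv
    have hχS : χ ∈ Sset φ₀ := mem_Sset_trans φ₀ hS
      (List.mem_cons.2 (Or.inr (self_mem_subf χ)))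
    have hm1 : md χ + 1 ≤ m := hmd
    obtain ⟨α, β⟩ := q
    have hIH : ∀ q', Inv A B k₁ k₂ φ₀ (m - 1) (gMap q') →
        (nSat (tauP k₁ k₂) (Vfin k₁ k₂ φ₀ LL t₀) q' χ ↔
          χ ∈ delta A B k₁ k₂ φ₀ LL t₀ (gMap q')) :=
      fun q' hq' => ih hχS (m - 1) (by omega) (by omega) q' hq'
    fin_cases i
    · -- box 0
      rcases Inv_noL_or A B k₁ k₂ φ₀ hinv with hno |
        ⟨r, z, m', d, hu, hr, hz, hpow, hd, hm', hinvr⟩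
      · -- fresh left block
        have hcon := Inv_con A B k₁ k₂ φ₀ t₀ hLL hL1 hL2 ht₀con hinv
        have hsub := Inv_subS (LL := LL) A B k₁ k₂ φ₀ t₀ ht₀S hinv
        refine core1 k₁ k₂ φ₀ LL t₀ χ hχS α β (gMap (α, β)) [] (m - 1)
          (by simp)
          (M := chooseV φ₀ A k₁ 0 LL (delta A B k₁ k₂ φ₀ LL t₀ (gMap (α, β))))
          ?_ ?_ ?_ hIH
        · intro w htr
          simp only [List.nil_append]
          by_cases hwe : w = []
          · subst hwe
            simp only [List.map_nil, List.append_nil]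
            exact (typeIn_chooseV_root φ₀ k₁ hLL 0 hL1 hcon hsub).symm
          · exact delta_left A B k₁ k₂ φ₀ LL t₀ _ _ hwe hno
        · conv_lhs => rw [← typeIn_chooseV_root φ₀ k₁ hLL 0 hL1 hcon hsub, mem_typeIn]
          rw [red_box_self]
          exact ⟨fun h => h.2, fun h => ⟨hS, h⟩⟩
        · intro w htr
          simp only [List.nil_append]
          by_cases hwe : w = []
          · subst hwe
            simp only [List.map_nil, List.append_nil]
            exact Inv_mono A B k₁ k₂ φ₀ hinv (by omega)
          · exact Inv.left (d := 1) (m' := m) hno hwe ⟨w, htr, rfl⟩ (by omega)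
              (by omega) hinv
      · -- within a left block
        have hconr := Inv_con A B k₁ k₂ φ₀ t₀ hLL hL1 hL2 ht₀con hinvr
        have hsubr := Inv_subS (LL := LL) A B k₁ k₂ φ₀ t₀ ht₀S hinvr
        refine core1 k₁ k₂ φ₀ LL t₀ χ hχS α β r z (m - 1) hu
          (M := chooseV φ₀ A k₁ 0 LL (delta A B k₁ k₂ φ₀ LL t₀ r)) ?_ ?_ ?_ hIH
        · intro w htr
          exact delta_left A B k₁ k₂ φ₀ LL t₀ _ _
            (fun hc => hz (List.append_eq_nil_iff.1 hc).1) hr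
        · rw [hu]
          conv_lhs => rw [delta_left A B k₁ k₂ φ₀ LL t₀ _ _ hz hr, mem_typeIn]
          rw [red_box_self]
          exact ⟨fun h => h.2, fun h => ⟨hS, h⟩⟩
        · intro w htr
          by_cases hwe : w = []
          · subst hwe
            simp only [List.append_nil]
            exact Inv.left hr hz hpow (by omega) (by omega) hinvr
          · have hp2 := powR_snoc hpow ((treeRel_append_iff k₁ z w).2 htr)
            exact Inv.left (m' := m') hr
              (fun hc => hz (List.append_eq_nil_iff.1 hc).1) hp2 (by omega) (by omega) hinvr
    · -- box 1
      rcases Inv_noR_or A B k₁ k₂ φ₀ hinv with hno |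
        ⟨r, z, m', d, hu, hr, hz, hpow, hd, hm', hinvr⟩
      · have hcon := Inv_con A B k₁ k₂ φ₀ t₀ hLL hL1 hL2 ht₀con hinv
        have hsub := Inv_subS (LL := LL) A B k₁ k₂ φ₀ t₀ ht₀S hinv
        refine core2 k₁ k₂ φ₀ LL t₀ χ hχS α β (gMap (α, β)) [] (m - 1)
          (by simp)
          (M := chooseV φ₀ B k₂ 1 LL (delta A B k₁ k₂ φ₀ LL t₀ (gMap (α, β))))
          ?_ ?_ ?_ hIH
        · intro w htr
          simp only [List.nil_append]
          by_cases hwe : w = []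
          · subst hwe
            simp only [List.map_nil, List.append_nil]
            exact (typeIn_chooseV_root φ₀ k₂ hLL 1 hL2 hcon hsub).symm
          · exact delta_right A B k₁ k₂ φ₀ LL t₀ _ _ hwe hno
        · conv_lhs => rw [← typeIn_chooseV_root φ₀ k₂ hLL 1 hL2 hcon hsub, mem_typeIn]
          rw [red_box_self]
          exact ⟨fun h => h.2, fun h => ⟨hS, h⟩⟩
        · intro w htr
          simp only [List.nil_append]
          by_cases hwe : w = []
          · subst hwe
            simp only [List.map_nil, List.append_nil]
            exact Inv_mono A B k₁ k₂ φ₀ hinv (by omega)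
          · exact Inv.right (d := 1) (m' := m) hno hwe ⟨w, htr, rfl⟩ (by omega)
              (by omega) hinv
      · have hconr := Inv_con A B k₁ k₂ φ₀ t₀ hLL hL1 hL2 ht₀con hinvr
        have hsubr := Inv_subS (LL := LL) A B k₁ k₂ φ₀ t₀ ht₀S hinvr
        refine core2 k₁ k₂ φ₀ LL t₀ χ hχS α β r z (m - 1) hu
          (M := chooseV φ₀ B k₂ 1 LL (delta A B k₁ k₂ φ₀ LL t₀ r)) ?_ ?_ ?_ hIH
        · intro w htr
          exact delta_right A B k₁ k₂ φ₀ LL t₀ _ _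
            (fun hc => hz (List.append_eq_nil_iff.1 hc).1) hr
        · rw [hu]
          conv_lhs => rw [delta_right A B k₁ k₂ φ₀ LL t₀ _ _ hz hr, mem_typeIn]
          rw [red_box_self]
          exact ⟨fun h => h.2, fun h => ⟨hS, h⟩⟩
        · intro w htr
          by_cases hwe : w = []
          · subst hwe
            simp only [List.append_nil]
            exact Inv.right hr hz hpow (by omega) (by omega) hinvr
          · have hp2 := powR_snoc hpow ((treeRel_append_iff k₂ z w).2 htr)
            exact Inv.right (m' := m') hr
              (fun hc => hz (List.append_eq_nil_iff.1 hc).1) hp2 (by omega) (by omega) hinvr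

end Truth

end S12
namespace S12

theorem main_result (A B : Type) [Nonempty A] [Nonempty B] (k₁ k₂ : TreeKind) :
    NLog2 (prodTau1 (nOmega (treeRel A k₁))) (prodTau2 (nOmega (treeRel B k₂)))
      ⊆ Fusion (KLog (treeRel A k₁)) (KLog (treeRel B k₂)) := by
  intro φ₀ hφ₀
  set LL := Fusion (KLog (treeRel A k₁)) (KLog (treeRel B k₂)) with hLLdef
  have hLL : IsNormalLogic LL := isNormal_normalClosure _
  have hL1 : ∀ a ∈ KLog (treeRel A k₁), trTo 0 a ∈ LL := fun a ha =>
    subset_normalClosure _ (Set.mem_union_left _ ⟨a, ha, rfl⟩)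
  have hL2 : ∀ a ∈ KLog (treeRel B k₂), trTo 1 a ∈ LL := fun a ha =>
    subset_normalClosure _ (Set.mem_union_right _ ⟨a, ha, rfl⟩)
  by_contra h₀
  obtain ⟨t₀, ht₀S, ht₀con, ht₀not⟩ := exists_t0 φ₀ hLL h₀
  have htl := truth k₁ k₂ φ₀ t₀ hLL hL1 hL2 ht₀con ht₀S φ₀ (mem_Sset_self φ₀)
    (md φ₀) le_rfl le_rfl (zeroSeq A, zeroSeq B)
    (by rw [gMap_zero]; exact Inv.nil _)
  have hsat : nSat (tauP k₁ k₂) (Vfin k₁ k₂ φ₀ LL t₀) (zeroSeq A, zeroSeq B) φ₀ :=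
    hφ₀ (Vfin k₁ k₂ φ₀ LL t₀) (zeroSeq A, zeroSeq B)
  rw [htl, gMap_zero, delta_nil] at hsat
  exact ht₀not hsat

end S12

/-- `Log(N_ω(F₁) × N_ω(F₂)) ⊆ Log(F₁) ⊗ Log(F₂)`. -/
theorem log_nOmega_prod_subset (A B : Type) [Nonempty A] [Nonempty B]
    (k₁ k₂ : TreeKind) :
    NLog2 (prodTau1 (nOmega (treeRel A k₁))) (prodTau2 (nOmega (treeRel B k₂)))
      ⊆ Fusion (KLog (treeRel A k₁)) (KLog (treeRel B k₂)) :=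
  S12.main_result A B k₁ k₂
end

section
/- Let A and B be disjoint countably infinite sets with 0 ∉ A ∪ B, and let F_1 be one of F_in[A], F_rn[A], F_it[A], F_rt[A] and F_2 one of F_in[B], F_rn[B], F_it[B], F_rt[B]. Then Log(N_ω(F_1) × N_ω(F_2)) = Log(F_1) ⊗ Log(F_2). -/
set_option autoImplicit false

/-! ### Part 1: generic normal logic facts -/

open MFormula

section Basics
variable {n : ℕ}

theorem isNormalLogic_univ : IsNormalLogic (Set.univ : Set (MFormula n)) :=
  ⟨fun _ _ => trivial, fun _ _ _ => trivial, fun _ _ _ _ => trivial,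
   fun _ _ _ => trivial, fun _ _ _ => trivial⟩

theorem isNormalLogic_normalClosure (Γ : Set (MFormula n)) :
    IsNormalLogic (NormalClosure Γ) := by
  constructor
  · intro φ h L hL; exact hL.1.taut φ h
  · intro i p q L hL; exact hL.1.kax i p q
  · intro φ ψ h1 h2 L hL; exact hL.1.mp φ ψ (h1 L hL) (h2 L hL)
  · intro φ s h L hL; exact hL.1.subst φ s (h L hL)
  · intro i φ h L hL; exact hL.1.nec i φ (h L hL)

theorem subset_normalClosure (Γ : Set (MFormula n)) : Γ ⊆ NormalClosure Γ :=
  fun _ h _ hL => hL.2 h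

theorem normalClosure_subset {Γ L : Set (MFormula n)} (hL : IsNormalLogic L)
    (h : Γ ⊆ L) : NormalClosure Γ ⊆ L :=
  fun _ hφ => hφ L ⟨hL, h⟩

/-- Implication chain `χ₁ → (χ₂ → ⋯ → ψ)`. -/
def ichain : List (MFormula n) → MFormula n → MFormula n
  | [], ψ => ψ
  | χ :: l, ψ => χ.imp (ichain l ψ)

theorem v_ichain {v : MFormula n → Prop}
    (hi : ∀ a b : MFormula n, v (a.imp b) ↔ (v a → v b)) :
    ∀ (l : List (MFormula n)) (ψ : MFormula n),
      v (ichain l ψ) ↔ ((∀ χ ∈ l, v χ) → v ψ)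
  | [], ψ => by simp [ichain]
  | χ :: l, ψ => by
    rw [ichain, hi, v_ichain hi l ψ]
    constructor
    · intro h hall; exact h (hall χ (by simp)) (fun x hx => hall x (by simp [hx]))
    · intro h hχ hall
      refine h ?_
      intro x hx
      rcases List.mem_cons.1 hx with rfl | hx
      · exact hχ
      · exact hall x hx

/-- The workhorse: a normal logic is closed under tautological consequence of
finitely many of its members. -/
theorem IsNormalLogic.tautoCons {L : Set (MFormula n)} (hL : IsNormalLogic L)
    {l : List (MFormula n)} {ψ : MFormula n}
    (h : ∀ v : MFormula n → Prop, ¬ v .bot →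
      (∀ a b : MFormula n, v (a.imp b) ↔ (v a → v b)) → (∀ χ ∈ l, v χ) → v ψ)
    (hl : ∀ χ ∈ l, χ ∈ L) : ψ ∈ L := by
  have hch : ichain l ψ ∈ L := by
    apply hL.taut
    intro v hb hi
    rw [v_ichain hi]
    exact h v hb hi
  clear h
  induction l with
  | nil => exact hch
  | cons χ l ih =>
      exact ih (fun x hx => hl x (by simp [hx]))
        (hL.mp _ _ hch (hl χ (by simp)))

end Basics

/-! ### Part 2: maximal consistent sets -/

section MCS
variable {n : ℕ} (L : Set (MFormula n))

/-- `S` is `L`-consistent. -/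
def LCon (S : Set (MFormula n)) : Prop :=
  ¬ ∃ l : List (MFormula n), (∀ χ ∈ l, χ ∈ S) ∧ ichain l .bot ∈ L

/-- `Γ` is a maximal `L`-consistent set. -/
def IsMCS (Γ : Set (MFormula n)) : Prop :=
  LCon L Γ ∧ ∀ ψ, ψ ∉ Γ → ¬ LCon L (insert ψ Γ)

variable {L}
attribute [local instance] Classical.propDecidable

theorem IsMCS.mem_of_L {Γ : Set (MFormula n)} (hL : IsNormalLogic L) (hΓ : IsMCS L Γ) {φ : MFormula n}
    (h : φ ∈ L) : φ ∈ Γ := by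
  by_contra hn
  obtain ⟨l, hl, hder⟩ := not_not.1 (hΓ.2 φ hn)
  refine hΓ.1 ⟨l.filter (· ≠ φ), fun χ hχ => ?_, ?_⟩
  · have h1 := List.of_mem_filter hχ
    have h2 := List.mem_of_mem_filter hχ
    rcases hl χ h2 with rfl | hh
    · simp at h1
    · exact hh
  · refine hL.tautoCons (l := [ichain l .bot, φ]) ?_ ?_
    · intro v hb hi hprem
      rw [v_ichain hi]
      intro hall
      have hch := hprem (ichain l MFormula.bot) (by simp)
      rw [v_ichain hi] at hch
      refine hch ?_
      intro χ hχ
      by_cases hc : χ = φ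
      · exact hc ▸ hprem φ (by simp)
      · exact hall χ (List.mem_filter.2 ⟨hχ, by simp [hc]⟩)
    · rintro χ hχ
      rcases List.mem_cons.1 hχ with rfl | hχ
      · exact hder
      · simp at hχ; exact hχ ▸ h

theorem IsMCS.lcon_subset {Γ S : Set (MFormula n)} (hΓ : LCon L Γ) (h : S ⊆ Γ) :
    LCon L S := fun ⟨l, hl, hd⟩ => hΓ ⟨l, fun χ hχ => h (hl χ hχ), hd⟩

theorem IsMCS.tautoCons {Γ : Set (MFormula n)} (hL : IsNormalLogic L) (hΓ : IsMCS L Γ)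
    {l : List (MFormula n)} {ψ : MFormula n}
    (h : ∀ v : MFormula n → Prop, ¬ v .bot →
      (∀ a b : MFormula n, v (a.imp b) ↔ (v a → v b)) → (∀ χ ∈ l, v χ) → v ψ)
    (hl : ∀ χ ∈ l, χ ∈ Γ) : ψ ∈ Γ := by
  by_contra hn
  obtain ⟨l', hl', hder⟩ := not_not.1 (hΓ.2 ψ hn)
  refine hΓ.1 ⟨l ++ l'.filter (· ≠ ψ), fun χ hχ => ?_, ?_⟩
  · rcases List.mem_append.1 hχ with hχ | hχ
    · exact hl χ hχ
    · have h1 := List.of_mem_filter hχ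
      have h2 := List.mem_of_mem_filter hχ
      rcases hl' χ h2 with rfl | hh
      · simp at h1
      · exact hh
  · refine hL.tautoCons (l := [ichain l' .bot]) ?_ (by simpa using hder)
    intro v hb hi hprem
    rw [v_ichain hi]
    intro hall
    have hvψ : v ψ := h v hb hi (fun χ hχ => hall χ (by simp [hχ]))
    have := hprem (ichain l' MFormula.bot) (by simp)
    rw [v_ichain hi] at this
    refine this ?_
    intro χ hχ
    by_cases hc : χ = ψ
    · exact hc ▸ hvψ
    · exact hall χ (List.mem_append.2 (Or.inr (List.mem_filter.2 ⟨hχ, by simp [hc]⟩)))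

theorem IsMCS.mp_mem {Γ : Set (MFormula n)} (hL : IsNormalLogic L) (hΓ : IsMCS L Γ) {φ ψ : MFormula n}
    (h1 : φ.imp ψ ∈ Γ) (h2 : φ ∈ Γ) : ψ ∈ Γ := by
  refine hΓ.tautoCons hL (l := [φ.imp ψ, φ]) ?_ (by simp [h1, h2])
  intro v hb hi hall
  have := hall (φ.imp ψ) (by simp)
  rw [hi] at this
  exact this (hall φ (by simp))

theorem IsMCS.not_bot_mem {Γ : Set (MFormula n)} (hL : IsNormalLogic L) (hΓ : IsMCS L Γ) :
    MFormula.bot ∉ Γ := by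
  intro h
  exact hΓ.1 ⟨[.bot], by simp [h], hL.taut _ (by
    intro v hb hi
    rw [v_ichain hi]
    intro hall
    exact hall .bot (by simp))⟩

theorem IsMCS.neg_mem_iff {Γ : Set (MFormula n)} (hL : IsNormalLogic L) (hΓ : IsMCS L Γ) {φ : MFormula n} :
    φ.neg ∈ Γ ↔ φ ∉ Γ := by
  constructor
  · intro h1 h2
    have : MFormula.bot ∈ Γ := by
      refine hΓ.tautoCons hL (l := [φ.neg, φ]) ?_ (by simp [h1, h2])
      intro v hb hi hall
      have := hall φ.neg (by simp)
      rw [MFormula.neg, hi] at this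
      exact absurd (this (hall φ (by simp))) hb
    exact hΓ.not_bot_mem hL this
  · intro h
    by_contra hn
    obtain ⟨l, hl, hder⟩ := not_not.1 (hΓ.2 φ.neg hn)
    -- Γ proves φ: φ ∈ Γ, contradiction with h
    refine h (hΓ.tautoCons hL (l := (ichain l .bot) :: l.filter (· ≠ φ.neg)) ?_ ?_)
    · intro v hb hi hall
      have hch := hall (ichain l .bot) (by simp)
      rw [v_ichain hi] at hch
      by_contra hvφ
      refine hb (hch ?_)
      intro χ hχ
      by_cases hc : χ = φ.neg
      · subst hc; rw [MFormula.neg, hi]; intro h'; exact absurd h' hvφ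
      · exact hall χ (by simp [List.mem_filter, hχ, hc])
    · intro χ hχ
      rcases List.mem_cons.1 hχ with rfl | hχ
      · exact hΓ.mem_of_L hL hder
      · have h1 := List.of_mem_filter hχ
        have h2 := List.mem_of_mem_filter hχ
        rcases hl χ h2 with rfl | hh
        · simp at h1
        · exact hh

theorem IsMCS.imp_mem_iff {Γ : Set (MFormula n)} (hL : IsNormalLogic L) (hΓ : IsMCS L Γ) {φ ψ : MFormula n} :
    φ.imp ψ ∈ Γ ↔ (φ ∈ Γ → ψ ∈ Γ) := by
  constructor
  · exact fun h1 h2 => hΓ.mp_mem hL h1 h2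
  · intro h
    by_cases hφ : φ ∈ Γ
    · refine hΓ.tautoCons hL (l := [ψ]) ?_ (by simp [h hφ])
      intro v hb hi hall
      rw [hi]; exact fun _ => hall ψ (by simp)
    · have := (hΓ.neg_mem_iff hL).2 hφ
      refine hΓ.tautoCons hL (l := [φ.neg]) ?_ (by simp [this])
      intro v hb hi hall
      have := hall φ.neg (by simp)
      rw [MFormula.neg, hi] at this
      rw [hi]
      intro hv
      exact absurd (this hv) hb

/-- Lindenbaum's lemma. -/
theorem lindenbaum {S : Set (MFormula n)} (hS : LCon L S) :
    ∃ Γ, S ⊆ Γ ∧ IsMCS L Γ := by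
  have hz : ∀ c ⊆ {T | LCon L T}, IsChain (· ⊆ ·) c → c.Nonempty →
      ∃ ub ∈ {T | LCon L T}, ∀ s ∈ c, s ⊆ ub := by
    intro c hc hchain hne
    refine ⟨⋃₀ c, fun ⟨l, hl, hder⟩ => ?_, fun T hT => Set.subset_sUnion_of_mem hT⟩
    -- find a single member of the chain containing all of l
    have : ∃ T ∈ c, ∀ χ ∈ l, χ ∈ T := by
      clear hder
      induction l with
      | nil => obtain ⟨T, hT⟩ := hne; exact ⟨T, hT, by simp⟩
      | cons χ l ih =>
          obtain ⟨T, hTc, hTl⟩ := ih (fun x hx => hl x (by simp [hx]))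
          obtain ⟨T', hT'c, hχT'⟩ := hl χ (by simp)
          rcases hchain.total hTc hT'c with h | h
          · refine ⟨T', hT'c, ?_⟩
            intro x hx
            rcases List.mem_cons.1 hx with rfl | hx
            · exact hχT'
            · exact h (hTl x hx)
          · refine ⟨T, hTc, ?_⟩
            intro x hx
            rcases List.mem_cons.1 hx with rfl | hx
            · exact h hχT'
            · exact hTl x hx
    obtain ⟨T, hTc, hTl⟩ := this
    exact hc hTc ⟨l, hTl, hder⟩
  obtain ⟨Γ, hsub, hmax⟩ := zorn_subset_nonempty {T | LCon L T} hz S hS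
  refine ⟨Γ, hsub, hmax.1, fun ψ hψ hcon => hψ ?_⟩
  have := hmax.2 hcon (Set.subset_insert _ _)
  exact this (Set.mem_insert _ _)

/-- Distribution of box over an implication chain. -/
theorem IsNormalLogic.box_ichain (hL : IsNormalLogic L) (i : Fin n) :
    ∀ (l : List (MFormula n)) (ψ : MFormula n),
      ((MFormula.box i (ichain l ψ)).imp (ichain (l.map (.box i)) (.box i ψ))) ∈ L
  | [], ψ => by
    refine hL.taut _ ?_
    intro v hb hi
    rw [ichain, List.map_nil, ichain, hi]
    exact id
  | χ :: l, ψ => by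
    have ih := hL.box_ichain i l ψ
    have hk := hL.kax i χ (ichain l ψ)
    refine hL.tautoCons (l := [(MFormula.box i (ichain (χ :: l) ψ)).imp
      ((MFormula.box i χ).imp (.box i (ichain l ψ))),
      (MFormula.box i (ichain l ψ)).imp (ichain (l.map (.box i)) (.box i ψ))]) ?_ ?_
    · intro v hb hi hall
      have h1 := hall ((MFormula.box i (ichain (χ :: l) ψ)).imp
        ((MFormula.box i χ).imp (.box i (ichain l ψ)))) (by simp)
      have h2 := hall ((MFormula.box i (ichain l ψ)).imp
        (ichain (l.map (.box i)) (.box i ψ))) (by simp)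
      rw [hi] at h1 h2
      rw [hi]
      intro hbx
      show v ((MFormula.box i χ).imp (ichain (l.map (.box i)) (.box i ψ)))
      rw [hi]
      intro hbχ
      have h1' := h1 hbx
      rw [hi] at h1'
      exact h2 (h1' hbχ)
    · intro χ' hχ'
      rcases List.mem_cons.1 hχ' with rfl | h
      · exact hk
      · simp at h; exact h ▸ ih

theorem IsMCS.peel_boxchain {Γ : Set (MFormula n)} (hL : IsNormalLogic L)
    (hΓ : IsMCS L Γ) {i : Fin n} {ψ : MFormula n} :
    ∀ l : List (MFormula n), (∀ χ ∈ l, MFormula.box i χ ∈ Γ) →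
      ichain (l.map (.box i)) (.box i ψ) ∈ Γ → MFormula.box i ψ ∈ Γ
  | [], _, h => h
  | χ :: l, hl, h => by
    rw [List.map_cons, ichain] at h
    exact hΓ.peel_boxchain hL l (fun x hx => hl x (by simp [hx]))
      (hΓ.mp_mem hL h (hl χ (by simp)))

/-- Existence lemma: if `□ᵢψ ∉ Γ` then there is an MCS `Δ` with
`{χ | □ᵢχ ∈ Γ} ⊆ Δ` and `ψ ∉ Δ`. -/
theorem IsMCS.exists_succ {Γ : Set (MFormula n)} (hL : IsNormalLogic L) (hΓ : IsMCS L Γ) {i : Fin n}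
    {ψ : MFormula n} (h : MFormula.box i ψ ∉ Γ) :
    ∃ Δ, IsMCS L Δ ∧ (∀ χ, MFormula.box i χ ∈ Γ → χ ∈ Δ) ∧ ψ ∉ Δ := by
  have hcon : LCon L ({χ | MFormula.box i χ ∈ Γ} ∪ {ψ.neg}) := by
    rintro ⟨l, hl, hder⟩
    set l' := l.filter (· ≠ ψ.neg) with hl'def
    have hl' : ∀ χ ∈ l', MFormula.box i χ ∈ Γ := by
      intro χ hχ
      have h1 := List.of_mem_filter hχ
      have h2 := List.mem_of_mem_filter hχ
      rcases hl χ h2 with hh | hh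
      · exact hh
      · simp at h1 hh; exact absurd hh h1
    have hch : ichain l' ψ ∈ L := by
      refine hL.tautoCons (l := [ichain l .bot]) ?_ (by simp [hder])
      intro v hb hi hall
      have := hall (ichain l .bot) (by simp)
      rw [v_ichain hi] at this
      rw [v_ichain hi]
      intro halll'
      by_contra hvψ
      refine hb (this ?_)
      intro χ hχ
      by_cases hc : χ = ψ.neg
      · subst hc; rw [MFormula.neg, hi]; exact fun h' => absurd h' hvψ
      · exact halll' χ (List.mem_filter.2 ⟨hχ, by simp [hc]⟩)
    have hboxch : MFormula.box i (ichain l' ψ) ∈ L := hL.nec i _ hch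
    have hdist := hL.box_ichain i l' ψ
    have hmem : ichain (l'.map (.box i)) (.box i ψ) ∈ Γ :=
      hΓ.mem_of_L hL (hL.mp _ _ hdist hboxch)
    exact h (hΓ.peel_boxchain hL l' hl' hmem)
  obtain ⟨Δ, hsub, hΔ⟩ := lindenbaum hcon
  refine ⟨Δ, hΔ, fun χ hχ => hsub (Or.inl hχ), fun hψ => ?_⟩
  have : ψ.neg ∈ Δ := hsub (Or.inr rfl)
  exact (hΔ.neg_mem_iff hL).1 this hψ

theorem lcon_singleton_neg {φ : MFormula n} (hL : IsNormalLogic L) (h : φ ∉ L) :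
    LCon L {φ.neg} := by
  rintro ⟨l, hl, hder⟩
  refine h (hL.tautoCons (l := [ichain l .bot]) ?_ (by simp [hder]))
  intro v hb hi hall
  have := hall (ichain l .bot) (by simp)
  rw [v_ichain hi] at this
  by_contra hvφ
  refine hb (this ?_)
  intro χ hχ
  have := hl χ hχ
  simp at this; subst this
  rw [MFormula.neg, hi]
  exact fun h' => absurd h' hvφ

end MCS

/-! ### Part 3: soundness of neighborhood semantics, product reduction -/

section Sound
variable {n : ℕ} {X : Type}

theorem nSat_subst (τ : Fin n → X → Filter X) (V : ℕ → Set X) (s : ℕ → MFormula n) :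
    ∀ (φ : MFormula n) (x : X),
      nSat τ V x (φ.subst s) ↔ nSat τ (fun p => {y | nSat τ V y (s p)}) x φ
  | .prop p, x => Iff.rfl
  | .bot, x => Iff.rfl
  | .imp φ ψ, x => by
    rw [MFormula.subst]
    show (nSat τ V x (φ.subst s) → nSat τ V x (ψ.subst s)) ↔ _
    rw [nSat_subst τ V s φ x, nSat_subst τ V s ψ x]; rfl
  | .box i φ, x => by
    rw [MFormula.subst]
    show {y | nSat τ V y (φ.subst s)} ∈ τ i x ↔ _
    have : {y | nSat τ V y (φ.subst s)}
        = {y | nSat τ (fun p => {y | nSat τ V y (s p)}) y φ} := by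
      ext y; exact nSat_subst τ V s φ y
    rw [this]; rfl

theorem isNormalLogic_NLogn [Nonempty X] (τ : Fin n → X → Filter X) :
    IsNormalLogic (NLogn τ) := by
  constructor
  · intro φ h V x
    exact h (fun ψ => nSat τ V x ψ) (fun hf => hf) (fun _ _ => Iff.rfl)
  · intro i p q V x
    show nSat τ V x _ → nSat τ V x _ → _
    intro h1 h2
    show _ ∈ τ i x
    have h1' : {y | nSat τ V y p → nSat τ V y q} ∈ τ i x := h1
    have h2' : {y | nSat τ V y p} ∈ τ i x := h2
    exact Filter.mem_of_superset (Filter.inter_mem h1' h2')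
      (fun y ⟨hy1, hy2⟩ => hy1 hy2)
  · intro φ ψ h1 h2 V x
    exact (h1 V x : nSat τ V x φ → nSat τ V x ψ) (h2 V x)
  · intro φ s h V x
    rw [nSat_subst]
    exact h _ x
  · intro i φ h V x
    show _ ∈ τ i x
    exact Filter.mem_of_superset Filter.univ_mem (fun y _ => h V y)

/-- Evaluation of boolean structure in Kripke models, for tautologies. -/
theorem isNormalLogic_KLogn {W : Type} [Nonempty W] (R : Fin n → W → W → Prop) :
    IsNormalLogic (KLogn R) := by
  constructor
  · intro φ h V w
    exact h (fun ψ => kSat R V w ψ) (fun hf => hf) (fun _ _ => Iff.rfl)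
  · intro i p q V w
    intro h1 h2 v hv
    exact h1 v hv (h2 v hv)
  · intro φ ψ h1 h2 V w
    exact (h1 V w : kSat R V w φ → kSat R V w ψ) (h2 V w)
  · intro φ s h V w
    -- kripke substitution lemma
    suffices hs : ∀ (ψ : MFormula n) (w : W),
        kSat R V w (ψ.subst s) ↔ kSat R (fun p => {v | kSat R V v (s p)}) w ψ by
      rw [hs]; exact h _ w
    intro ψ
    induction ψ with
    | prop p => intro w; exact Iff.rfl
    | bot => intro w; exact Iff.rfl
    | imp φ₁ φ₂ ih1 ih2 =>
        intro w
        rw [MFormula.subst]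
        show (kSat R V w _ → kSat R V w _) ↔ _
        rw [ih1 w, ih2 w]; rfl
    | box i φ₁ ih =>
        intro w
        rw [MFormula.subst]
        show (∀ v, R i w v → kSat R V v (φ₁.subst s)) ↔ _
        constructor
        · intro hh v hv; exact (ih v).1 (hh v hv)
        · intro hh v hv; exact (ih v).2 (hh v hv)
  · intro i φ h V w
    intro v _
    exact h V v

end Sound

section Reduction

variable {X₁ X₂ : Type}

/-- Reduction of `□₁`-translated formulas in a product of neighborhood frames. -/
theorem nSat_trTo0 (τ₁ : X₁ → Filter X₁) (τ₂ : X₂ → Filter X₂)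
    (V : ℕ → Set (X₁ × X₂)) (φ : MFormula 1) :
    ∀ (x : X₁) (y : X₂),
      nSat ![prodTau1 τ₁, prodTau2 τ₂] V (x, y) (trTo 0 φ) ↔
        nSat (fun _ => τ₁) (fun p => {x' | (x', y) ∈ V p}) x φ := by
  induction φ with
  | prop p => intro x y; exact Iff.rfl
  | bot => intro x y; exact Iff.rfl
  | imp φ₁ φ₂ ih1 ih2 =>
      intro x y
      rw [trTo]
      show (nSat _ V (x, y) (trTo 0 φ₁) → nSat _ V (x, y) (trTo 0 φ₂)) ↔ _
      rw [ih1 x y, ih2 x y]; rfl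
  | box i φ₁ ih =>
      intro x y
      rw [trTo]
      show {q | nSat _ V q (trTo 0 φ₁)} ∈ (![prodTau1 τ₁, prodTau2 τ₂] 0) (x, y) ↔
        {x' | nSat (fun _ => τ₁) _ x' φ₁} ∈ τ₁ x
      have h0 : (![prodTau1 τ₁, prodTau2 τ₂] : Fin 2 → _) 0 = prodTau1 τ₁ := rfl
      rw [h0]
      show _ ∈ (τ₁ x).map (fun a => (a, y)) ↔ _
      rw [Filter.mem_map]
      have : (fun a => (a, y)) ⁻¹' {q | nSat ![prodTau1 τ₁, prodTau2 τ₂] V q (trTo 0 φ₁)}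
          = {x' | nSat (fun _ => τ₁) (fun p => {x' | (x', y) ∈ V p}) x' φ₁} := by
        ext x'; exact ih x' y
      rw [this]

theorem nSat_trTo1 (τ₁ : X₁ → Filter X₁) (τ₂ : X₂ → Filter X₂)
    (V : ℕ → Set (X₁ × X₂)) (φ : MFormula 1) :
    ∀ (x : X₁) (y : X₂),
      nSat ![prodTau1 τ₁, prodTau2 τ₂] V (x, y) (trTo 1 φ) ↔
        nSat (fun _ => τ₂) (fun p => {y' | (x, y') ∈ V p}) y φ := by
  induction φ with
  | prop p => intro x y; exact Iff.rfl
  | bot => intro x y; exact Iff.rfl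
  | imp φ₁ φ₂ ih1 ih2 =>
      intro x y
      rw [trTo]
      show (nSat _ V (x, y) (trTo 1 φ₁) → nSat _ V (x, y) (trTo 1 φ₂)) ↔ _
      rw [ih1 x y, ih2 x y]; rfl
  | box i φ₁ ih =>
      intro x y
      rw [trTo]
      show {q | nSat _ V q (trTo 1 φ₁)} ∈ (![prodTau1 τ₁, prodTau2 τ₂] 1) (x, y) ↔ _
      have h1 : (![prodTau1 τ₁, prodTau2 τ₂] : Fin 2 → _) 1 = prodTau2 τ₂ := rfl
      rw [h1]
      show _ ∈ (τ₂ y).map (fun b => (x, b)) ↔ _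
      rw [Filter.mem_map]
      have : (fun b => (x, b)) ⁻¹' {q | nSat ![prodTau1 τ₁, prodTau2 τ₂] V q (trTo 1 φ₁)}
          = {y' | nSat (fun _ => τ₂) (fun p => {y' | (x, y') ∈ V p}) y' φ₁} := by
        ext y'; exact ih x y'
      rw [this]
      exact Iff.rfl

theorem trTo0_mem_NLog2 [Nonempty X₁] [Nonempty X₂] (τ₁ : X₁ → Filter X₁)
    (τ₂ : X₂ → Filter X₂) {φ : MFormula 1} (h : φ ∈ NLog τ₁) :
    trTo 0 φ ∈ NLog2 (prodTau1 τ₁) (prodTau2 τ₂) := by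
  intro V q
  obtain ⟨x, y⟩ := q
  rw [nSat_trTo0]
  exact h _ x

theorem trTo1_mem_NLog2 [Nonempty X₁] [Nonempty X₂] (τ₁ : X₁ → Filter X₁)
    (τ₂ : X₂ → Filter X₂) {φ : MFormula 1} (h : φ ∈ NLog τ₂) :
    trTo 1 φ ∈ NLog2 (prodTau1 τ₁) (prodTau2 τ₂) := by
  intro V q
  obtain ⟨x, y⟩ := q
  rw [nSat_trTo1]
  exact h _ y

end Reduction

/-! ### Part 4: tree relations, axiom validity in trees, countability -/

/-- Allowed lengths of appended words, per tree kind. -/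
def TreeKind.zOK : TreeKind → ℕ → Prop
  | .inn => fun m => m = 1
  | .rn => fun m => m ≤ 1
  | .itr => fun m => 1 ≤ m
  | .rt => fun _ => True

def TreeKind.isRefl : TreeKind → Prop
  | .rn => True
  | .rt => True
  | _ => False

def TreeKind.isTrans : TreeKind → Prop
  | .itr => True
  | .rt => True
  | _ => False

theorem TreeKind.zOK_one (k : TreeKind) : k.zOK 1 := by cases k <;> simp [TreeKind.zOK]

theorem TreeKind.zOK_zero_of_isRefl {k : TreeKind} (h : k.isRefl) : k.zOK 0 := by
  cases k <;> simp_all [TreeKind.zOK, TreeKind.isRefl]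

theorem TreeKind.isRefl_of_zOK_zero {k : TreeKind} (h : k.zOK 0) : k.isRefl := by
  cases k <;> simp_all [TreeKind.zOK, TreeKind.isRefl]

theorem TreeKind.isTrans_of_zOK {k : TreeKind} {m : ℕ} (h : k.zOK m) (hm : 2 ≤ m) :
    k.isTrans := by
  cases k <;> simp_all [TreeKind.zOK, TreeKind.isTrans] <;> omega

section TreeRel
variable {A : Type}

theorem transGen_sucRel_iff {u v : List A} :
    Relation.TransGen (sucRel A) u v ↔ ∃ z, z ≠ [] ∧ v = u ++ z := by
  constructor
  · intro h
    induction h with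
    | single h => obtain ⟨x, rfl⟩ := h; exact ⟨[x], by simp⟩
    | tail _ h ih =>
        obtain ⟨x, rfl⟩ := h
        obtain ⟨z, hz, rfl⟩ := ih
        exact ⟨z ++ [x], by simp, by simp⟩
  · rintro ⟨z, hz, rfl⟩
    induction z using List.reverseRecOn with
    | nil => exact absurd rfl hz
    | append_singleton z x ih =>
        rcases eq_or_ne z [] with rfl | hne
        · exact Relation.TransGen.single ⟨x, by simp⟩
        · exact Relation.TransGen.tail (ih hne) ⟨x, by simp⟩

theorem reflTransGen_sucRel_iff {u v : List A} :
    Relation.ReflTransGen (sucRel A) u v ↔ ∃ z, v = u ++ z := by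
  constructor
  · intro h
    induction h with
    | refl => exact ⟨[], by simp⟩
    | tail _ h ih =>
        obtain ⟨x, rfl⟩ := h
        obtain ⟨z, rfl⟩ := ih
        exact ⟨z ++ [x], by simp⟩
  · rintro ⟨z, rfl⟩
    induction z using List.reverseRecOn with
    | nil =>
        have : u ++ ([] : List A) = u := by simp
        rw [this]
    | append_singleton z x ih =>
        exact Relation.ReflTransGen.tail ih ⟨x, by simp⟩

/-- Characterization of the tree relations. -/
theorem treeRel_iff (k : TreeKind) (u v : List A) :
    treeRel A k u v ↔ ∃ z, k.zOK z.length ∧ v = u ++ z := by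
  cases k with
  | inn =>
      simp only [treeRel, sucRel, TreeKind.zOK]
      constructor
      · rintro ⟨x, rfl⟩; exact ⟨[x], by simp⟩
      · rintro ⟨z, hz, rfl⟩
        obtain ⟨x, rfl⟩ := List.length_eq_one_iff.1 hz
        exact ⟨x, rfl⟩
  | rn =>
      simp only [treeRel, sucRel, TreeKind.zOK]
      constructor
      · rintro (rfl | ⟨x, rfl⟩)
        · exact ⟨[], by simp⟩
        · exact ⟨[x], by simp⟩
      · rintro ⟨z, hz, rfl⟩
        interval_cases h : z.length
        · rw [List.length_eq_zero_iff] at h; subst h; left; simp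
        · obtain ⟨x, rfl⟩ := List.length_eq_one_iff.1 h; right; exact ⟨x, rfl⟩
  | itr =>
      rw [treeRel, transGen_sucRel_iff]
      simp only [TreeKind.zOK]
      constructor
      · rintro ⟨z, hz, rfl⟩; exact ⟨z, by simpa [Nat.one_le_iff_ne_zero] using hz, rfl⟩
      · rintro ⟨z, hz, rfl⟩
        refine ⟨z, ?_, rfl⟩
        intro h; subst h; simp at hz
  | rt =>
      rw [treeRel, reflTransGen_sucRel_iff]
      simp only [TreeKind.zOK, true_and]

theorem treeRel_append {k : TreeKind} (u : List A) {z : List A} (hz : k.zOK z.length) :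
    treeRel A k u (u ++ z) := (treeRel_iff k u _).2 ⟨z, hz, rfl⟩

theorem treeRel_trans {k : TreeKind} (hk : k.isTrans) {u v w : List A}
    (h1 : treeRel A k u v) (h2 : treeRel A k v w) : treeRel A k u w := by
  cases k with
  | inn => exact absurd hk (by simp [TreeKind.isTrans])
  | rn => exact absurd hk (by simp [TreeKind.isTrans])
  | itr => exact Relation.TransGen.trans h1 h2
  | rt => exact Relation.ReflTransGen.trans h1 h2

theorem treeRel_refl {k : TreeKind} (hk : k.isRefl) (u : List A) : treeRel A k u u := by
  have := treeRel_append (k := k) u (z := []) (TreeKind.zOK_zero_of_isRefl hk)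
  simpa using this

/-- Validity of the D axiom in any of the tree frames (over a nonempty alphabet). -/
theorem dAx_mem_KLog [Nonempty A] (k : TreeKind) : dAx ∈ KLog (treeRel A k) := by
  intro V w
  show kSat _ V w _
  intro h1 h2
  obtain ⟨a⟩ := ‹Nonempty A›
  have hsuc : treeRel A k w (w ++ [a]) := treeRel_append w (by simpa using k.zOK_one)
  exact h2 (w ++ [a]) hsuc (h1 (w ++ [a]) hsuc)

theorem tAx_mem_KLog {k : TreeKind} (hk : k.isRefl) : tAx ∈ KLog (treeRel (A := A) k) := by
  intro V w
  intro h1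
  exact h1 w (treeRel_refl hk w)

theorem fourAx_mem_KLog {k : TreeKind} (hk : k.isTrans) :
    fourAx ∈ KLog (treeRel (A := A) k) := by
  intro V w
  intro h1 v hv u hu
  exact h1 u (treeRel_trans hk hv hu)

end TreeRel

/-! Countability of formulas. -/

namespace MFormula

def enc {n : ℕ} : MFormula n → ℕ
  | .prop p => Nat.pair 0 p
  | .bot => Nat.pair 1 0
  | .imp a b => Nat.pair 2 (Nat.pair (enc a) (enc b))
  | .box i a => Nat.pair 3 (Nat.pair i.val (enc a))

theorem enc_injective {n : ℕ} : Function.Injective (enc (n := n)) := by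
  intro φ
  induction φ with
  | prop p => intro ψ h; cases ψ <;> simp_all [enc, Nat.pair_eq_pair]
  | bot => intro ψ h; cases ψ <;> simp_all [enc, Nat.pair_eq_pair]
  | imp a b iha ihb =>
      intro ψ h
      cases ψ with
      | imp a' b' =>
          simp [enc, Nat.pair_eq_pair] at h
          rw [iha h.1, ihb h.2]
      | prop p => simp [enc, Nat.pair_eq_pair] at h
      | bot => simp [enc, Nat.pair_eq_pair] at h
      | box j c => simp [enc, Nat.pair_eq_pair] at h
  | box i a ih =>
      intro ψ h
      cases ψ with
      | box j c =>
          simp [enc, Nat.pair_eq_pair] at h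
          obtain ⟨h1, h2⟩ := h
          have hij : i = j := Fin.ext h1
          subst hij
          rw [ih h2]
      | prop p => simp [enc, Nat.pair_eq_pair] at h
      | bot => simp [enc, Nat.pair_eq_pair] at h
      | imp a' b' => simp [enc, Nat.pair_eq_pair] at h

instance {n : ℕ} : Countable (MFormula n) := enc_injective.countable

instance {n : ℕ} : Nonempty (MFormula n) := ⟨.bot⟩

end MFormula

/-- A surjection from any countably infinite type onto formulas. -/
theorem exists_formula_surjection (A : Type) [Countable A] [Infinite A] (n : ℕ) :
    ∃ e : A → MFormula n, Function.Surjective e := by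
  obtain ⟨d⟩ := nonempty_denumerable A
  obtain ⟨f, hf⟩ := exists_surjective_nat (MFormula n)
  exact ⟨f ∘ (Denumerable.eqv A), hf.comp (Denumerable.eqv A).surjective⟩

/-! ### Part 5: selection of a tree countermodel from maximal consistent sets -/

section Selection
variable {n : ℕ} {C : Type}

/-- Tree relations on `List C`, one per modality, determined by labelled letters. -/
def selRel (kinds : Fin n → TreeKind) (lab : C → Fin n) (i : Fin n)
    (x y : List C) : Prop :=
  ∃ z : List C, (∀ c ∈ z, lab c = i) ∧ (kinds i).zOK z.length ∧ y = x ++ z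

theorem mcs_seriality {L : Set (MFormula n)} (hL : IsNormalLogic L)
    (hD : ∀ (i : Fin n) (ψ : MFormula n),
      ((MFormula.box i ψ).imp ((MFormula.box i ψ.neg).neg)) ∈ L)
    {Γ : Set (MFormula n)} (hΓ : IsMCS L Γ) (i : Fin n) :
    ∃ Δ, IsMCS L Δ ∧ ∀ χ, MFormula.box i χ ∈ Γ → χ ∈ Δ := by
  have hcon : LCon L {χ | MFormula.box i χ ∈ Γ} := by
    rintro ⟨l, hl, hder⟩
    have hbox : MFormula.box i (ichain l .bot) ∈ L := hL.nec i _ hder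
    have hmem : ichain (l.map (.box i)) (.box i .bot) ∈ Γ :=
      hΓ.mem_of_L hL (hL.mp _ _ (hL.box_ichain i l .bot) hbox)
    have hbb : MFormula.box i .bot ∈ Γ := hΓ.peel_boxchain hL l hl hmem
    have hd := hΓ.mem_of_L hL (hD i .bot)
    have h1 : ((MFormula.box i (MFormula.bot.neg)).neg) ∈ Γ := hΓ.mp_mem hL hd hbb
    have h2 : MFormula.box i (MFormula.bot.neg) ∈ Γ := by
      refine hΓ.mem_of_L hL (hL.nec i _ (hL.taut _ ?_))
      intro v hb hi
      rw [MFormula.neg, hi]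
      exact id
    exact (hΓ.neg_mem_iff hL).1 h1 h2
  obtain ⟨Δ, hsub, hΔ⟩ := lindenbaum hcon
  exact ⟨Δ, hΔ, fun χ hχ => hsub hχ⟩

/-- The main selection theorem: any MCS is realized at the root of a tree model. -/
theorem selection {L : Set (MFormula n)} (kinds : Fin n → TreeKind)
    (lab : C → Fin n) (e : C → MFormula n)
    (hL : IsNormalLogic L)
    (hD : ∀ (i : Fin n) (ψ : MFormula n),
      ((MFormula.box i ψ).imp ((MFormula.box i ψ.neg).neg)) ∈ L)
    (hT : ∀ i, (kinds i).isRefl → ∀ ψ : MFormula n,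
      ((MFormula.box i ψ).imp ψ) ∈ L)
    (h4 : ∀ i, (kinds i).isTrans → ∀ ψ : MFormula n,
      ((MFormula.box i ψ).imp (.box i (.box i ψ))) ∈ L)
    (he : ∀ (i : Fin n) (ψ : MFormula n), ∃ c, lab c = i ∧ e c = ψ)
    {Γ₀ : Set (MFormula n)} (hΓ₀ : IsMCS L Γ₀) :
    ∃ g : List C → Set (MFormula n), g [] = Γ₀ ∧
      ∀ (ψ : MFormula n) (x : List C),
        kSat (selRel kinds lab) (fun p => {x | MFormula.prop p ∈ g x}) x ψ ↔ ψ ∈ g x := by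
  classical
  have hsucc : ∀ (c : C) (Γ : {Γ : Set (MFormula n) // IsMCS L Γ}),
      ∃ Δ : {Γ : Set (MFormula n) // IsMCS L Γ},
        (∀ χ, MFormula.box (lab c) χ ∈ Γ.1 → χ ∈ Δ.1) ∧
        (MFormula.box (lab c) (e c) ∉ Γ.1 → e c ∉ Δ.1) := by
    intro c Γ
    by_cases hb : MFormula.box (lab c) (e c) ∈ Γ.1
    · obtain ⟨Δ, hΔ, hcan⟩ := mcs_seriality hL hD Γ.2 (lab c)
      exact ⟨⟨Δ, hΔ⟩, hcan, fun h => absurd hb h⟩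
    · obtain ⟨Δ, hΔ, hcan, hne⟩ := Γ.2.exists_succ hL hb
      exact ⟨⟨Δ, hΔ⟩, hcan, fun _ => hne⟩
  choose succ hsucc1 hsucc2 using hsucc
  set g0 : List C → {Γ : Set (MFormula n) // IsMCS L Γ} :=
    fun x => x.foldl (fun Γ c => succ c Γ) ⟨Γ₀, hΓ₀⟩ with hg0
  have hstep : ∀ (x : List C) (c : C), g0 (x ++ [c]) = succ c (g0 x) := by
    intro x c; simp [hg0, List.foldl_append]
  have hstep1 : ∀ (x : List C) (c : C) (χ : MFormula n),
      MFormula.box (lab c) χ ∈ (g0 x).1 → χ ∈ (g0 (x ++ [c])).1 := by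
    intro x c χ hχ
    rw [hstep x c]
    exact hsucc1 c (g0 x) χ hχ
  have hchain_trans : ∀ i, (kinds i).isTrans → ∀ z : List C, z ≠ [] →
      (∀ c ∈ z, lab c = i) → ∀ (x : List C) (χ : MFormula n),
      MFormula.box i χ ∈ (g0 x).1 → χ ∈ (g0 (x ++ z)).1 := by
    intro i hi z
    induction z using List.reverseRecOn with
    | nil => intro h; exact absurd rfl h
    | append_singleton z c ih =>
        intro _ hlabel x χ hχ
        have hlabc : lab c = i := hlabel c (by simp)
        have hz : ∀ c' ∈ z, lab c' = i := fun c' hc' => hlabel c' (by simp [hc'])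
        rcases eq_or_ne z [] with rfl | hne
        · have := hstep1 x c χ (by rw [hlabc]; exact hχ)
          simpa using this
        · have hboxbox : MFormula.box i (MFormula.box i χ) ∈ (g0 x).1 :=
            (g0 x).2.mp_mem hL ((g0 x).2.mem_of_L hL (h4 i hi χ)) hχ
          have hmid : MFormula.box i χ ∈ (g0 (x ++ z)).1 :=
            ih hne hz x (MFormula.box i χ) hboxbox
          have := hstep1 (x ++ z) c χ (by rw [hlabc]; exact hmid)
          rw [List.append_assoc] at this
          exact this
  have hchain : ∀ (i : Fin n) (z : List C), (∀ c ∈ z, lab c = i) →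
      (kinds i).zOK z.length → ∀ (x : List C) (χ : MFormula n),
      MFormula.box i χ ∈ (g0 x).1 → χ ∈ (g0 (x ++ z)).1 := by
    intro i z hlabel hzOK x χ hχ
    match z, hlabel, hzOK with
    | [], _, hzOK =>
        have hrefl := TreeKind.isRefl_of_zOK_zero hzOK
        have := (g0 x).2.mp_mem hL ((g0 x).2.mem_of_L hL (hT i hrefl χ)) hχ
        simpa using this
    | [c], hlabel, _ =>
        have := hstep1 x c χ (by rw [hlabel c (by simp)]; exact hχ)
        exact this
    | c1 :: c2 :: rest, hlabel, hzOK =>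
        have hlen : 2 ≤ (c1 :: c2 :: rest).length := by simp only [List.length_cons]; omega
        have htr := TreeKind.isTrans_of_zOK hzOK hlen
        exact hchain_trans i htr _ (by simp) hlabel x χ hχ
  -- the truth lemma
  refine ⟨fun x => (g0 x).1, by simp [hg0], ?_⟩
  intro ψ
  induction ψ with
  | prop p => intro x; exact Iff.rfl
  | bot =>
      intro x
      show False ↔ _
      simp only [false_iff]
      exact (g0 x).2.not_bot_mem hL
  | imp φ₁ φ₂ ih1 ih2 =>
      intro x
      show (kSat _ _ x φ₁ → kSat _ _ x φ₂) ↔ _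
      rw [ih1 x, ih2 x, (g0 x).2.imp_mem_iff hL]
  | box i φ ih =>
      intro x
      show (∀ y, selRel kinds lab i x y → kSat _ _ y φ) ↔ _
      constructor
      · intro hall
        by_contra hbox
        obtain ⟨c, hlabc, hec⟩ := he i φ
        have hsel : selRel kinds lab i x (x ++ [c]) :=
          ⟨[c], by simp [hlabc], by simpa using (kinds i).zOK_one, rfl⟩
        have hmem := (ih (x ++ [c])).1 (hall _ hsel)
        have : e c ∉ (g0 (x ++ [c])).1 := by
          rw [hstep x c]
          exact hsucc2 c (g0 x) (by rw [hlabc, hec]; exact hbox)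
        rw [hec] at this
        exact this hmem
      · rintro hbox y ⟨z, hlabel, hzOK, rfl⟩
        exact (ih _).2 (hchain i z hlabel hzOK x φ hbox)

end Selection

/-! ### Part 6: pseudo-infinite sequences: `st`, `forget`, padding, interleaving -/

namespace PSeq
variable {A : Type} {B : Type}

theorem st_spec (γ : PSeq A) : ∀ k ≥ γ.st, γ.1 k = none := by
  have : γ.st ∈ {N | ∀ k ≥ N, γ.1 k = none} := Nat.sInf_mem γ.2
  exact this

theorem st_le {γ : PSeq A} {N : ℕ} (h : ∀ k ≥ N, γ.1 k = none) : γ.st ≤ N :=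
  Nat.sInf_le h

theorem st_last {γ : PSeq A} (h : 0 < γ.st) : γ.1 (γ.st - 1) ≠ none := by
  intro hc
  have key : γ.st - 1 < sInf {N | ∀ k ≥ N, γ.1 k = none} := by
    have he : sInf {N | ∀ k ≥ N, γ.1 k = none} = γ.st := rfl
    rw [he]; omega
  have hnm : γ.st - 1 ∉ {N | ∀ k ≥ N, γ.1 k = none} :=
    Nat.notMem_of_lt_sInf key
  refine hnm ?_
  intro k hk
  rcases eq_or_lt_of_le hk with rfl | hlt
  · exact hc
  · exact γ.st_spec k (by omega)

/-- First `M` letters. -/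
def fUpTo (γ : PSeq A) (M : ℕ) : List A := ((List.range M).map γ.1).reduceOption

/-- Letters in positions `[a, b)`. -/
def seg (γ : PSeq A) (a b : ℕ) : List A :=
  ((List.range' a (b - a)).map γ.1).reduceOption

theorem reduceOption_eq_nil {l : List (Option A)} (h : ∀ x ∈ l, x = none) :
    l.reduceOption = [] := by
  induction l with
  | nil => rfl
  | cons a l ih =>
      have ha := h a (by simp)
      subst ha
      rw [List.reduceOption_cons_of_none]
      exact ih (fun x hx => h x (by simp [hx]))

theorem reduceOption_map_some (z : List A) : (z.map some).reduceOption = z := by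
  induction z with
  | nil => rfl
  | cons a z ih => simp [List.reduceOption_cons_of_some, ih]

theorem range_split {a b : ℕ} (h : a ≤ b) :
    List.range b = List.range a ++ List.range' a (b - a) := by
  rw [List.range_eq_range', List.range_eq_range']
  have h2 := List.range'_append (s := 0) (m := a) (n := b - a) (step := 1)
  simp only [Nat.zero_add, Nat.one_mul] at h2
  have hba : a + (b - a) = b := by omega
  rw [hba] at h2
  exact h2.symm

theorem fUpTo_split (γ : PSeq A) {a b : ℕ} (h : a ≤ b) :
    γ.fUpTo b = γ.fUpTo a ++ γ.seg a b := by
  rw [fUpTo, range_split h, List.map_append, List.reduceOption_append]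
  rfl

theorem seg_eq_nil {γ : PSeq A} {a b : ℕ} (h : γ.st ≤ a) : γ.seg a b = [] := by
  refine reduceOption_eq_nil ?_
  intro x hx
  obtain ⟨j, hj, rfl⟩ := List.mem_map.1 hx
  exact γ.st_spec j (le_trans h (List.mem_range'_1.1 hj).1)

theorem forget_eq_fUpTo {γ : PSeq A} {M : ℕ} (h : γ.st ≤ M) :
    γ.forget = γ.fUpTo M := by
  rw [γ.fUpTo_split h, seg_eq_nil (le_refl _), List.append_nil]
  rfl

theorem fUpTo_congr {γ γ' : PSeq A} {M : ℕ} (h : ∀ j < M, γ'.1 j = γ.1 j) :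
    γ'.fUpTo M = γ.fUpTo M := by
  rw [fUpTo, fUpTo]
  congr 1
  refine List.map_congr_left ?_
  intro j hj
  exact h j (List.mem_range.1 hj)

/-- Decomposition of the forgetful word along an agreement bound. -/
theorem forget_agree_decomp {γ γ' : PSeq A} {m : ℕ}
    (h : ∀ j < m, γ'.1 j = γ.1 j) (hγ : γ.st ≤ m) :
    γ'.forget = γ.forget ++ γ'.seg m (max m γ'.st) := by
  have h1 : γ'.st ≤ max m γ'.st := le_max_right _ _
  have h2 : m ≤ max m γ'.st := le_max_left _ _
  rw [forget_eq_fUpTo h1, γ'.fUpTo_split h2, fUpTo_congr h, ← forget_eq_fUpTo hγ]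

/-- Pad `γ` with the word `z` starting at position `m`. -/
def padAppend (γ : PSeq A) (m : ℕ) (z : List A) : PSeq A :=
  ⟨fun j => if j < m then γ.1 j else z[(j - m)]?, by
    refine ⟨m + z.length, fun k hk => ?_⟩
    show (if k < m then γ.1 k else z[(k - m)]?) = none
    rw [if_neg (by omega)]
    exact List.getElem?_eq_none (by omega)⟩

theorem padAppend_agree (γ : PSeq A) (m : ℕ) (z : List A) {j : ℕ} (h : j < m) :
    (γ.padAppend m z).1 j = γ.1 j := if_pos h

theorem st_padAppend_le (γ : PSeq A) (m : ℕ) (z : List A) :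
    (γ.padAppend m z).st ≤ m + z.length := by
  refine st_le (fun k hk => ?_)
  show (if k < m then γ.1 k else z[(k - m)]?) = none
  rw [if_neg (by omega)]
  exact List.getElem?_eq_none (by omega)

theorem range'_map_getElem? (z : List A) : ∀ m : ℕ,
    (List.range' m z.length).map (fun j => z[(j - m)]?) = z.map some := by
  induction z with
  | nil => intro m; rfl
  | cons a z ih =>
      intro m
      rw [List.length_cons, List.range'_succ, List.map_cons]
      have h0 : (a :: z)[(m - m)]? = some a := by simp
      rw [h0, List.map_cons]
      congr 1
      have : ∀ j ∈ List.range' (m + 1) z.length,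
          ((a :: z)[(j - m)]? : Option A) = z[(j - (m + 1))]? := by
        intro j hj
        have hj1 := (List.mem_range'_1.1 hj).1
        have : j - m = (j - (m + 1)) + 1 := by omega
        rw [this, List.getElem?_cons_succ]
      rw [List.map_congr_left this, ih (m + 1)]

theorem forget_padAppend {γ : PSeq A} {m : ℕ} (z : List A) (h : γ.st ≤ m) :
    (γ.padAppend m z).forget = γ.forget ++ z := by
  rw [forget_eq_fUpTo (γ.st_padAppend_le m z),
    (γ.padAppend m z).fUpTo_split (Nat.le_add_right m z.length)]
  congr 1
  · rw [fUpTo_congr (fun j hj => γ.padAppend_agree m z hj), ← forget_eq_fUpTo h]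
  · rw [seg]
    have hlen : m + z.length - m = z.length := by omega
    rw [hlen]
    have : (List.range' m z.length).map (γ.padAppend m z).1
        = (List.range' m z.length).map (fun j => z[(j - m)]?) := by
      refine List.map_congr_left ?_
      intro j hj
      have hj1 := (List.mem_range'_1.1 hj).1
      show (if j < m then γ.1 j else z[(j - m)]?) = _
      rw [if_neg (by omega)]
    rw [this, range'_map_getElem?, reduceOption_map_some]

/-! Interleaving. -/

theorem il_even (α : PSeq A) (β : PSeq B) (j : ℕ) :
    (interleave α β).1 (2 * j) = (α.1 j).map Sum.inl := by
  have h1 : 2 * j % 2 = 0 := by omega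
  have h2 : 2 * j / 2 = j := by omega
  show (if 2 * j % 2 = 0 then (α.1 (2 * j / 2)).map Sum.inl
    else (β.1 (2 * j / 2)).map Sum.inr) = _
  rw [if_pos h1, h2]

theorem il_odd (α : PSeq A) (β : PSeq B) (j : ℕ) :
    (interleave α β).1 (2 * j + 1) = (β.1 j).map Sum.inr := by
  have h1 : ¬((2 * j + 1) % 2 = 0) := by omega
  have h2 : (2 * j + 1) / 2 = j := by omega
  show (if (2 * j + 1) % 2 = 0 then (α.1 ((2 * j + 1) / 2)).map Sum.inl
    else (β.1 ((2 * j + 1) / 2)).map Sum.inr) = _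
  rw [if_neg h1, h2]

theorem st_il_le {α : PSeq A} {β : PSeq B} {M : ℕ} (hα : α.st ≤ M) (hβ : β.st ≤ M) :
    (interleave α β).st ≤ 2 * M := by
  refine st_le (fun k hk => ?_)
  show (if k % 2 = 0 then (α.1 (k / 2)).map Sum.inl
    else (β.1 (k / 2)).map Sum.inr) = none
  by_cases h : k % 2 = 0
  · rw [if_pos h, α.st_spec (k / 2) (by omega)]; rfl
  · rw [if_neg h, β.st_spec (k / 2) (by omega)]; rfl

theorem il_agree {α α' : PSeq A} {β : PSeq B} {m : ℕ}
    (h : ∀ j < m, α'.1 j = α.1 j) :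
    ∀ t < 2 * m, (interleave α' β).1 t = (interleave α β).1 t := by
  intro t ht
  show (if t % 2 = 0 then (α'.1 (t / 2)).map Sum.inl else (β.1 (t / 2)).map Sum.inr)
    = (if t % 2 = 0 then (α.1 (t / 2)).map Sum.inl else (β.1 (t / 2)).map Sum.inr)
  by_cases hp : t % 2 = 0
  · rw [if_pos hp, if_pos hp, h (t / 2) (by omega)]
  · rw [if_neg hp, if_neg hp]

theorem il_agree' {α : PSeq A} {β β' : PSeq B} {m : ℕ}
    (h : ∀ j < m, β'.1 j = β.1 j) :
    ∀ t < 2 * m, (interleave α β').1 t = (interleave α β).1 t := by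
  intro t ht
  show (if t % 2 = 0 then (α.1 (t / 2)).map Sum.inl else (β'.1 (t / 2)).map Sum.inr)
    = (if t % 2 = 0 then (α.1 (t / 2)).map Sum.inl else (β.1 (t / 2)).map Sum.inr)
  by_cases hp : t % 2 = 0
  · rw [if_pos hp, if_pos hp]
  · rw [if_neg hp, if_neg hp, h (t / 2) (by omega)]

theorem il_seg {α' : PSeq A} {β : PSeq B} {m : ℕ}
    (hβ : ∀ j, m ≤ j → β.1 j = none) :
    ∀ t : ℕ, ((List.range' (2 * m) (2 * t)).map (interleave α' β).1).reduceOption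
      = List.map Sum.inl (((List.range' m t).map α'.1).reduceOption) := by
  intro t
  induction t with
  | zero => rfl
  | succ t ih =>
      have e1 : 2 * (t + 1) = (2 * t + 1) + 1 := by ring
      rw [e1, List.range'_concat, List.range'_concat]
      rw [List.map_append, List.map_append, List.reduceOption_append,
        List.reduceOption_append, ih]
      rw [List.range'_concat, List.map_append, List.reduceOption_append]
      have e2 : 2 * m + 1 * (2 * t) = 2 * (m + t) := by ring
      have e3 : 2 * m + 1 * (2 * t + 1) = 2 * (m + t) + 1 := by ring
      rw [e2, e3]
      have h1 : (interleave α' β).1 (2 * (m + t)) = (α'.1 (m + t)).map Sum.inl :=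
        il_even α' β (m + t)
      have h2 : (interleave α' β).1 (2 * (m + t) + 1) = none := by
        rw [il_odd α' β (m + t), hβ (m + t) (by omega)]; rfl
      have e4 : m + 1 * t = m + t := by ring
      rw [e4]
      cases hα : α'.1 (m + t) with
      | none => simp [h1, h2, hα, List.reduceOption_cons_of_none]
      | some a => simp [h1, h2, hα, List.reduceOption_cons_of_some]

theorem il_seg' {α : PSeq A} {β' : PSeq B} {m : ℕ}
    (hα : ∀ j, m ≤ j → α.1 j = none) :
    ∀ t : ℕ, ((List.range' (2 * m) (2 * t)).map (interleave α β').1).reduceOption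
      = List.map Sum.inr (((List.range' m t).map β'.1).reduceOption) := by
  intro t
  induction t with
  | zero => rfl
  | succ t ih =>
      have e1 : 2 * (t + 1) = (2 * t + 1) + 1 := by ring
      rw [e1, List.range'_concat, List.range'_concat]
      rw [List.map_append, List.map_append, List.reduceOption_append,
        List.reduceOption_append, ih]
      rw [List.range'_concat, List.map_append, List.reduceOption_append]
      have e2 : 2 * m + 1 * (2 * t) = 2 * (m + t) := by ring
      have e3 : 2 * m + 1 * (2 * t + 1) = 2 * (m + t) + 1 := by ring
      rw [e2, e3]
      have h1 : (interleave α β').1 (2 * (m + t)) = none := by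
        rw [il_even α β' (m + t), hα (m + t) (by omega)]; rfl
      have h2 : (interleave α β').1 (2 * (m + t) + 1) = (β'.1 (m + t)).map Sum.inr :=
        il_odd α β' (m + t)
      have e4 : m + 1 * t = m + t := by ring
      rw [e4]
      cases hβ : β'.1 (m + t) with
      | none => simp [h1, h2, hβ, List.reduceOption_cons_of_none]
      | some b => simp [h1, h2, hβ, List.reduceOption_cons_of_some]

/-- Key computation: changing the first coordinate beyond the relevant positions
appends an `inl`-word to the interleaving's forgetful word. -/
theorem gLemma1 {α α' : PSeq A} {β : PSeq B} {m : ℕ} {z : List A}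
    (hagree : ∀ j < m, α'.1 j = α.1 j) (hα : α.st ≤ m) (hβ : β.st ≤ m)
    (hz : α'.forget = α.forget ++ z) :
    (interleave α' β).forget = (interleave α β).forget ++ z.map Sum.inl := by
  set M := max m α'.st with hM
  have hmM : m ≤ M := le_max_left _ _
  have hα'M : α'.st ≤ M := le_max_right _ _
  -- identify z with the segment of α' above m
  have hd : α'.forget = α.forget ++ α'.seg m M := forget_agree_decomp hagree hα
  have hzseg : α'.seg m M = z := by
    have h' : α.forget ++ α'.seg m M = α.forget ++ z := by rw [← hd, ← hz]
    exact List.append_cancel_left h'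
  -- compute the forgetful word of the interleaving
  have hstil : (interleave α' β).st ≤ 2 * M :=
    st_il_le hα'M (le_trans hβ hmM)
  rw [forget_eq_fUpTo hstil, (interleave α' β).fUpTo_split
    (by omega : 2 * m ≤ 2 * M)]
  have h1 : (interleave α' β).fUpTo (2 * m) = (interleave α β).forget := by
    rw [fUpTo_congr (il_agree hagree), ← forget_eq_fUpTo (st_il_le hα hβ)]
  have h2 : (interleave α' β).seg (2 * m) (2 * M) = z.map Sum.inl := by
    rw [seg]
    have e : 2 * M - 2 * m = 2 * (M - m) := by omega
    rw [e, il_seg (fun j hj => β.st_spec j (by omega)) (M - m), ← hzseg, seg]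
  rw [h1, h2]

theorem gLemma2 {α : PSeq A} {β β' : PSeq B} {m : ℕ} {z : List B}
    (hagree : ∀ j < m, β'.1 j = β.1 j) (hβ : β.st ≤ m) (hα : α.st ≤ m)
    (hz : β'.forget = β.forget ++ z) :
    (interleave α β').forget = (interleave α β).forget ++ z.map Sum.inr := by
  set M := max m β'.st with hM
  have hmM : m ≤ M := le_max_left _ _
  have hβ'M : β'.st ≤ M := le_max_right _ _
  have hd : β'.forget = β.forget ++ β'.seg m M := forget_agree_decomp hagree hβ
  have hzseg : β'.seg m M = z := by
    have h' : β.forget ++ β'.seg m M = β.forget ++ z := by rw [← hd, ← hz]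
    exact List.append_cancel_left h'
  have hstil : (interleave α β').st ≤ 2 * M :=
    st_il_le (le_trans hα hmM) hβ'M
  rw [forget_eq_fUpTo hstil, (interleave α β').fUpTo_split
    (by omega : 2 * m ≤ 2 * M)]
  have h1 : (interleave α β').fUpTo (2 * m) = (interleave α β).forget := by
    rw [fUpTo_congr (il_agree' hagree), ← forget_eq_fUpTo (st_il_le hα hβ)]
  have h2 : (interleave α β').seg (2 * m) (2 * M) = z.map Sum.inr := by
    rw [seg]
    have e : 2 * M - 2 * m = 2 * (M - m) := by omega
    rw [e, il_seg' (fun j hj => α.st_spec j (by omega)) (M - m), ← hzseg, seg]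
  rw [h1, h2]

/-- The all-zeros sequence. -/
def zeros (A : Type) : PSeq A := ⟨fun _ => none, 0, fun _ _ => rfl⟩

theorem forget_of_none {γ : PSeq A} (h : ∀ k, γ.1 k = none) : γ.forget = [] := by
  have h0 : γ.st ≤ 0 := st_le (fun k _ => h k)
  rw [forget_eq_fUpTo h0]
  rfl

theorem zeros_st : (zeros A).st = 0 := Nat.le_zero.1 (st_le (fun _ _ => rfl))

theorem gMap_zeros : gMap (zeros A, zeros B) = [] := by
  refine forget_of_none ?_
  intro k
  show (if k % 2 = 0 then ((zeros A).1 (k / 2)).map Sum.inl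
    else ((zeros B).1 (k / 2)).map Sum.inr) = none
  by_cases h : k % 2 = 0 <;> simp [h, zeros]

end PSeq

/-! ### Part 7: the logic of `N_ω(F)` contains the logic of the tree `F` -/

section NOmega
variable {A : Type}

theorem Unbhd_anti (R : List A → List A → Prop) {k j : ℕ} (h : k ≤ j) (α : PSeq A) :
    Unbhd R j α ⊆ Unbhd R k α := by
  rintro β ⟨h1, h2⟩
  exact ⟨fun i hi => h1 i (by omega), h2⟩

theorem mem_nOmega {R : List A → List A → Prop} {α : PSeq A} {S : Set (PSeq A)} :
    S ∈ nOmega R α ↔ ∃ k, Unbhd R k α ⊆ S := by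
  rw [nOmega, Filter.mem_iInf_of_directed]
  · simp only [Filter.mem_principal]
  · intro k j
    exact ⟨max k j, Filter.principal_mono.2 (Unbhd_anti R (le_max_left _ _) α),
      Filter.principal_mono.2 (Unbhd_anti R (le_max_right _ _) α)⟩

theorem Unbhd_nonempty [Nonempty A] (kd : TreeKind) (k : ℕ) (α : PSeq A) :
    (Unbhd (treeRel A kd) k α).Nonempty := by
  obtain ⟨a⟩ := ‹Nonempty A›
  refine ⟨α.padAppend (max k α.st) [a], fun i hi => (α.padAppend_agree _ _ hi).symm, ?_⟩
  rw [PSeq.forget_padAppend [a] (le_max_right _ _)]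
  exact treeRel_append _ (by simpa using kd.zOK_one)

theorem self_mem_Unbhd {kd : TreeKind} (hk : kd.isRefl) (k : ℕ) (α : PSeq A) :
    α ∈ Unbhd (treeRel A kd) k α :=
  ⟨fun _ _ => rfl, treeRel_refl hk _⟩

theorem Unbhd_subset_of_trans {kd : TreeKind} (hk : kd.isTrans) {k : ℕ}
    {α β : PSeq A} (hβ : β ∈ Unbhd (treeRel A kd) k α) :
    Unbhd (treeRel A kd) k β ⊆ Unbhd (treeRel A kd) k α := by
  obtain ⟨hβ1, hβ2⟩ := hβ
  rintro γ ⟨hγ1, hγ2⟩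
  have hstle : max k α.st ≤ max k β.st := by
    rcases le_or_gt α.st k with h | h
    · omega
    · have hpos : 0 < α.st := by omega
      have hne : α.1 (α.st - 1) ≠ none := PSeq.st_last hpos
      have heq : β.1 (α.st - 1) = α.1 (α.st - 1) := (hβ1 (α.st - 1) (by omega)).symm
      have : α.st ≤ β.st := by
        by_contra hc
        push_neg at hc
        have := β.st_spec (α.st - 1) (by omega)
        rw [heq] at this
        exact hne this
      omega
  refine ⟨fun i hi => ?_, treeRel_trans hk hβ2 hγ2⟩
  rw [hβ1 i hi]
  exact hγ1 i (by omega)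

/-- D is valid in `N_ω` of any of the trees. -/
theorem dAx_mem_NLog_nOmega [Nonempty A] (kd : TreeKind) :
    dAx ∈ NLog (nOmega (treeRel A kd)) := by
  intro V α
  intro h1 h2
  have h1' : {β | nSat (fun _ => nOmega (treeRel A kd)) V β (.prop 0)}
      ∈ nOmega (treeRel A kd) α := h1
  have h2' : {β | nSat (fun _ => nOmega (treeRel A kd)) V β ((MFormula.prop 0).neg)}
      ∈ nOmega (treeRel A kd) α := h2
  obtain ⟨k1, hk1⟩ := mem_nOmega.1 h1'
  obtain ⟨k2, hk2⟩ := mem_nOmega.1 h2'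
  obtain ⟨β, hβ⟩ := Unbhd_nonempty kd (max k1 k2) α
  have hb1 := hk1 (Unbhd_anti _ (le_max_left _ _) α hβ)
  have hb2 := hk2 (Unbhd_anti _ (le_max_right _ _) α hβ)
  exact hb2 hb1

theorem tAx_mem_NLog_nOmega {kd : TreeKind} (hk : kd.isRefl) :
    tAx ∈ NLog (nOmega (treeRel (A := A) kd)) := by
  intro V α
  intro h1
  have h1' : {β | nSat (fun _ => nOmega (treeRel A kd)) V β (.prop 0)}
      ∈ nOmega (treeRel A kd) α := h1
  obtain ⟨k, hk1⟩ := mem_nOmega.1 h1'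
  exact hk1 (self_mem_Unbhd hk k α)

theorem fourAx_mem_NLog_nOmega {kd : TreeKind} (hk : kd.isTrans) :
    fourAx ∈ NLog (nOmega (treeRel (A := A) kd)) := by
  intro V α
  intro h1
  have h1' : {β | nSat (fun _ => nOmega (treeRel A kd)) V β (.prop 0)}
      ∈ nOmega (treeRel A kd) α := h1
  obtain ⟨k, hk1⟩ := mem_nOmega.1 h1'
  show {β | nSat (fun _ => nOmega (treeRel A kd)) V β (.box 0 (.prop 0))}
      ∈ nOmega (treeRel A kd) α
  refine mem_nOmega.2 ⟨k, fun β hβ => ?_⟩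
  show {γ | nSat (fun _ => nOmega (treeRel A kd)) V γ (.prop 0)}
      ∈ nOmega (treeRel A kd) β
  exact mem_nOmega.2 ⟨k, fun γ hγ => hk1 (Unbhd_subset_of_trans hk hβ hγ)⟩

/-- The axioms of the logic of a tree of kind `k`. -/
def kindAxioms (k : TreeKind) : Set (MFormula 1) :=
  {φ | φ = dAx ∨ (k.isRefl ∧ φ = tAx) ∨ (k.isTrans ∧ φ = fourAx)}

theorem kindAxioms_sub_NLog [Nonempty A] (k : TreeKind) :
    kindAxioms k ⊆ NLog (nOmega (treeRel A k)) := by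
  rintro φ (rfl | ⟨hr, rfl⟩ | ⟨ht, rfl⟩)
  · exact dAx_mem_NLog_nOmega k
  · exact tAx_mem_NLog_nOmega hr
  · exact fourAx_mem_NLog_nOmega ht

/-- Completeness: every formula valid in the tree of kind `k` is derivable from
the corresponding axioms. -/
theorem KLog_subset_closure (A : Type) [Countable A] [Infinite A] (k : TreeKind) :
    KLog (treeRel A k) ⊆ NormalClosure (kindAxioms k) := by
  intro φ hφ
  by_contra hn
  set L := NormalClosure (kindAxioms k) with hLdef
  have hL : IsNormalLogic L := isNormalLogic_normalClosure _
  have hcon : LCon L {φ.neg} := lcon_singleton_neg hL hn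
  obtain ⟨Γ₀, hsub, hΓ₀⟩ := lindenbaum hcon
  obtain ⟨e, he⟩ := exists_formula_surjection A 1
  have hsel := selection (C := A) (fun _ => k) (fun _ => (0 : Fin 1)) e hL
    (fun i ψ => ?_) (fun i hr ψ => ?_) (fun i ht ψ => ?_) (fun i ψ => ?_) hΓ₀
  rotate_left
  · -- hD
    have hd : dAx ∈ L := subset_normalClosure _ (Or.inl rfl)
    have := hL.subst dAx (fun _ => ψ) hd
    have hi : i = 0 := Fin.fin_one_eq_zero i
    rw [hi]
    exact this
  · -- hT
    have hd : tAx ∈ L := subset_normalClosure _ (Or.inr (Or.inl ⟨hr, rfl⟩))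
    have := hL.subst tAx (fun _ => ψ) hd
    have hi : i = 0 := Fin.fin_one_eq_zero i
    rw [hi]
    exact this
  · -- h4
    have hd : fourAx ∈ L := subset_normalClosure _ (Or.inr (Or.inr ⟨ht, rfl⟩))
    have := hL.subst fourAx (fun _ => ψ) hd
    have hi : i = 0 := Fin.fin_one_eq_zero i
    rw [hi]
    exact this
  · -- he
    obtain ⟨c, hc⟩ := he ψ
    exact ⟨c, Fin.fin_one_eq_zero _ ▸ rfl, hc⟩
  obtain ⟨g, hg0, htruth⟩ := hsel
  -- identify the selection relation with the tree relation
  have hrel : selRel (fun _ => k) (fun _ : A => (0 : Fin 1)) =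
      (fun _ : Fin 1 => treeRel A k) := by
    funext i x y
    refine propext ?_
    rw [treeRel_iff]
    constructor
    · rintro ⟨z, _, hz, rfl⟩; exact ⟨z, hz, rfl⟩
    · rintro ⟨z, hz, rfl⟩
      exact ⟨z, fun c _ => (Fin.fin_one_eq_zero i).symm, hz, rfl⟩
  have hK := hφ (fun p => {x | MFormula.prop p ∈ g x}) []
  rw [← hrel] at hK
  have hmem : φ ∈ g [] := (htruth φ []).1 hK
  have hneg : φ.neg ∈ g [] := by rw [hg0]; exact hsub rfl
  exact (hΓ₀.neg_mem_iff hL).1 (hg0 ▸ hneg) (hg0 ▸ hmem)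

theorem KLog_subset_NLog_nOmega (A : Type) [Countable A] [Infinite A] (k : TreeKind) :
    KLog (treeRel A k) ⊆ NLog (nOmega (treeRel A k)) :=
  fun φ h =>
    normalClosure_subset (isNormalLogic_NLogn _) (kindAxioms_sub_NLog k)
      (KLog_subset_closure A k h)

end NOmega

/-! ### Part 8: transfer between the neighborhood product and the Kripke frame -/

section Transfer
variable {A B : Type} {k₁ k₂ : TreeKind}

theorem transfer (k₁ k₂ : TreeKind) (V : ℕ → Set (List (A ⊕ B))) :
    ∀ (φ : MFormula 2) (α : PSeq A) (β : PSeq B),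
      nSat ![prodTau1 (nOmega (treeRel A k₁)), prodTau2 (nOmega (treeRel B k₂))]
        (fun p => gMap ⁻¹' (V p)) (α, β) φ ↔
      kSat ![prodRel1 A B k₁, prodRel2 A B k₂] V (gMap (α, β)) φ := by
  intro φ
  induction φ with
  | prop p => intro α β; exact Iff.rfl
  | bot => intro α β; exact Iff.rfl
  | imp φ₁ φ₂ ih1 ih2 =>
      intro α β
      show (nSat _ _ (α, β) φ₁ → nSat _ _ (α, β) φ₂) ↔
        (kSat _ V (gMap (α, β)) φ₁ → kSat _ V (gMap (α, β)) φ₂)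
      rw [ih1 α β, ih2 α β]
  | box i φ ih =>
      intro α β
      fin_cases i
      · -- first modality
        show {q | nSat _ _ q φ} ∈ prodTau1 (nOmega (treeRel A k₁)) (α, β) ↔
          (∀ y, prodRel1 A B k₁ (gMap (α, β)) y → kSat _ V y φ)
        rw [prodTau1, Filter.mem_map]
        change {α' | nSat _ _ (α', β) φ} ∈ nOmega (treeRel A k₁) α ↔ _
        rw [mem_nOmega]
        constructor
        · rintro ⟨k, hU⟩ y ⟨w, hw, rfl⟩
          obtain ⟨z, hzOK, hz⟩ := (treeRel_iff k₁ [] w).1 hw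
          have hwz : w = z := by simpa using hz
          subst hwz
          set m := max k (max α.st β.st) with hm
          have hαm : α.st ≤ m := by omega
          have hβm : β.st ≤ m := by omega
          have hag : ∀ j < m, (α.padAppend m w).1 j = α.1 j :=
            fun j hj => α.padAppend_agree m w hj
          have hforget : (α.padAppend m w).forget = α.forget ++ w :=
            PSeq.forget_padAppend w hαm
          have hmem : α.padAppend m w ∈ Unbhd (treeRel A k₁) k α := by
            refine ⟨fun i hi => (hag i (by omega)).symm, ?_⟩
            rw [hforget]
            exact treeRel_append _ hzOK
          have hsat := hU hmem
          have hgm : gMap (α.padAppend m w, β) = gMap (α, β) ++ w.map Sum.inl :=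
            PSeq.gLemma1 hag hαm hβm hforget
          have := (ih (α.padAppend m w) β).1 hsat
          rw [hgm] at this
          exact this
        · intro hK
          refine ⟨max α.st β.st, ?_⟩
          rintro α' ⟨hag', hrel⟩
          have hαm : α.st ≤ max (max α.st β.st) α.st := by omega
          have hβm : β.st ≤ max (max α.st β.st) α.st := by omega
          obtain ⟨z, hzOK, hforget'⟩ := (treeRel_iff k₁ α.forget α'.forget).1 hrel
          have hgm : gMap (α', β) = gMap (α, β) ++ z.map Sum.inl :=
            PSeq.gLemma1 (fun j hj => (hag' j hj).symm) hαm hβm hforget'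
          have hpr : prodRel1 A B k₁ (gMap (α, β)) (gMap (α', β)) :=
            ⟨z, (treeRel_iff k₁ [] z).2 ⟨z, hzOK, by simp⟩, hgm⟩
          exact (ih α' β).2 (hK _ hpr)
      · -- second modality
        show {q | nSat _ _ q φ} ∈ prodTau2 (nOmega (treeRel B k₂)) (α, β) ↔
          (∀ y, prodRel2 A B k₂ (gMap (α, β)) y → kSat _ V y φ)
        rw [prodTau2, Filter.mem_map]
        change {β' | nSat _ _ (α, β') φ} ∈ nOmega (treeRel B k₂) β ↔ _
        rw [mem_nOmega]
        constructor
        · rintro ⟨k, hU⟩ y ⟨w, hw, rfl⟩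
          obtain ⟨z, hzOK, hz⟩ := (treeRel_iff k₂ [] w).1 hw
          have hwz : w = z := by simpa using hz
          subst hwz
          set m := max k (max α.st β.st) with hm
          have hαm : α.st ≤ m := by omega
          have hβm : β.st ≤ m := by omega
          have hag : ∀ j < m, (β.padAppend m w).1 j = β.1 j :=
            fun j hj => β.padAppend_agree m w hj
          have hforget : (β.padAppend m w).forget = β.forget ++ w :=
            PSeq.forget_padAppend w hβm
          have hmem : β.padAppend m w ∈ Unbhd (treeRel B k₂) k β := by
            refine ⟨fun i hi => (hag i (by omega)).symm, ?_⟩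
            rw [hforget]
            exact treeRel_append _ hzOK
          have hsat := hU hmem
          have hgm : gMap (α, β.padAppend m w) = gMap (α, β) ++ w.map Sum.inr :=
            PSeq.gLemma2 hag hβm hαm hforget
          have := (ih α (β.padAppend m w)).1 hsat
          rw [hgm] at this
          exact this
        · intro hK
          refine ⟨max α.st β.st, ?_⟩
          rintro β' ⟨hag', hrel⟩
          have hαm : α.st ≤ max (max α.st β.st) β.st := by omega
          have hβm : β.st ≤ max (max α.st β.st) β.st := by omega
          obtain ⟨z, hzOK, hforget'⟩ := (treeRel_iff k₂ β.forget β'.forget).1 hrel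
          have hgm : gMap (α, β') = gMap (α, β) ++ z.map Sum.inr :=
            PSeq.gLemma2 (fun j hj => (hag' j hj).symm) hβm hαm hforget'
          have hpr : prodRel2 A B k₂ (gMap (α, β)) (gMap (α, β')) :=
            ⟨z, (treeRel_iff k₂ [] z).2 ⟨z, hzOK, by simp⟩, hgm⟩
          exact (ih α β').2 (hK _ hpr)

end Transfer

/-! ### Part 9: assembly -/

section Assembly
variable {A B : Type}

theorem exists_map_inl : ∀ z : List (A ⊕ B),
    (∀ c ∈ z, Sum.elim (fun _ => (0 : Fin 2)) (fun _ => (1 : Fin 2)) c = 0) →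
    ∃ w : List A, z = w.map Sum.inl := by
  intro z
  induction z with
  | nil => intro _; exact ⟨[], rfl⟩
  | cons c z ih =>
      intro h
      obtain ⟨w, rfl⟩ := ih (fun c' hc' => h c' (by simp [hc']))
      cases c with
      | inl a => exact ⟨a :: w, rfl⟩
      | inr b =>
          have := h (Sum.inr b) (by simp)
          simp at this

theorem exists_map_inr : ∀ z : List (A ⊕ B),
    (∀ c ∈ z, Sum.elim (fun _ => (0 : Fin 2)) (fun _ => (1 : Fin 2)) c = 1) →
    ∃ w : List B, z = w.map Sum.inr := by
  intro z
  induction z with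
  | nil => intro _; exact ⟨[], rfl⟩
  | cons c z ih =>
      intro h
      obtain ⟨w, rfl⟩ := ih (fun c' hc' => h c' (by simp [hc']))
      cases c with
      | inr b => exact ⟨b :: w, rfl⟩
      | inl a =>
          have := h (Sum.inl a) (by simp)
          simp at this

/-- The selection relation over `A ⊕ B` is the Kripke product-frame relation. -/
theorem selRel_eq_prodRel (k₁ k₂ : TreeKind) :
    selRel (C := A ⊕ B) ![k₁, k₂] (Sum.elim (fun _ => 0) (fun _ => 1)) =
      ![prodRel1 A B k₁, prodRel2 A B k₂] := by
  funext i x y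
  refine propext ?_
  fin_cases i
  · show selRel _ _ 0 x y ↔ prodRel1 A B k₁ x y
    constructor
    · rintro ⟨z, hlab, hzOK, rfl⟩
      obtain ⟨w, rfl⟩ := exists_map_inl z hlab
      refine ⟨w, (treeRel_iff k₁ [] w).2 ⟨w, ?_, by simp⟩, rfl⟩
      rw [List.length_map] at hzOK
      exact hzOK
    · rintro ⟨w, hw, rfl⟩
      obtain ⟨z', hzOK, hz'⟩ := (treeRel_iff k₁ [] w).1 hw
      have hwz : w = z' := by simpa using hz'
      subst hwz
      exact ⟨w.map Sum.inl, by simp, by rw [List.length_map]; exact hzOK, rfl⟩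
  · show selRel _ _ 1 x y ↔ prodRel2 A B k₂ x y
    constructor
    · rintro ⟨z, hlab, hzOK, rfl⟩
      obtain ⟨w, rfl⟩ := exists_map_inr z hlab
      refine ⟨w, (treeRel_iff k₂ [] w).2 ⟨w, ?_, by simp⟩, rfl⟩
      rw [List.length_map] at hzOK
      exact hzOK
    · rintro ⟨w, hw, rfl⟩
      obtain ⟨z', hzOK, hz'⟩ := (treeRel_iff k₂ [] w).1 hw
      have hwz : w = z' := by simpa using hz'
      subst hwz
      exact ⟨w.map Sum.inr, by simp, by rw [List.length_map]; exact hzOK, rfl⟩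

theorem final_theorem (A B : Type) [Countable A] [Infinite A]
    [Countable B] [Infinite B] (k₁ k₂ : TreeKind) :
    NLog2 (prodTau1 (nOmega (treeRel A k₁))) (prodTau2 (nOmega (treeRel B k₂)))
      = Fusion (KLog (treeRel A k₁)) (KLog (treeRel B k₂)) := by
  apply Set.Subset.antisymm
  · -- hard direction: the product logic is contained in the fusion
    intro φ hφ
    by_contra hn
    set L := Fusion (KLog (treeRel A k₁)) (KLog (treeRel B k₂)) with hLdef
    have hL : IsNormalLogic L := isNormalLogic_normalClosure _
    have hdA : trTo 0 dAx ∈ L :=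
      subset_normalClosure _ (Or.inl ⟨dAx, dAx_mem_KLog k₁, rfl⟩)
    have hdB : trTo 1 dAx ∈ L :=
      subset_normalClosure _ (Or.inr ⟨dAx, dAx_mem_KLog k₂, rfl⟩)
    obtain ⟨Γ₀, hsub, hΓ₀⟩ := lindenbaum (lcon_singleton_neg hL hn)
    obtain ⟨eA, heA⟩ := exists_formula_surjection A 2
    obtain ⟨eB, heB⟩ := exists_formula_surjection B 2
    have hsel := selection (C := A ⊕ B) ![k₁, k₂]
      (Sum.elim (fun _ => 0) (fun _ => 1)) (Sum.elim eA eB) hL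
      (fun i ψ => ?_) (fun i hr ψ => ?_) (fun i ht ψ => ?_) (fun i ψ => ?_) hΓ₀
    rotate_left
    · -- hD
      fin_cases i
      · exact hL.subst (trTo 0 dAx) (fun _ => ψ) hdA
      · exact hL.subst (trTo 1 dAx) (fun _ => ψ) hdB
    · -- hT
      fin_cases i
      · have h : tAx ∈ KLog (treeRel A k₁) := tAx_mem_KLog hr
        exact hL.subst (trTo 0 tAx) (fun _ => ψ)
          (subset_normalClosure _ (Or.inl ⟨tAx, h, rfl⟩))
      · have h : tAx ∈ KLog (treeRel B k₂) := tAx_mem_KLog hr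
        exact hL.subst (trTo 1 tAx) (fun _ => ψ)
          (subset_normalClosure _ (Or.inr ⟨tAx, h, rfl⟩))
    · -- h4
      fin_cases i
      · have h : fourAx ∈ KLog (treeRel A k₁) := fourAx_mem_KLog ht
        exact hL.subst (trTo 0 fourAx) (fun _ => ψ)
          (subset_normalClosure _ (Or.inl ⟨fourAx, h, rfl⟩))
      · have h : fourAx ∈ KLog (treeRel B k₂) := fourAx_mem_KLog ht
        exact hL.subst (trTo 1 fourAx) (fun _ => ψ)
          (subset_normalClosure _ (Or.inr ⟨fourAx, h, rfl⟩))
    · -- he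
      fin_cases i
      · obtain ⟨c, hc⟩ := heA ψ
        exact ⟨Sum.inl c, rfl, hc⟩
      · obtain ⟨c, hc⟩ := heB ψ
        exact ⟨Sum.inr c, rfl, hc⟩
    obtain ⟨g, hg0, htruth⟩ := hsel
    set V : ℕ → Set (List (A ⊕ B)) := fun p => {x | MFormula.prop p ∈ g x} with hV
    have hsat := hφ (fun p => gMap ⁻¹' (V p)) (PSeq.zeros A, PSeq.zeros B)
    rw [transfer k₁ k₂ V φ (PSeq.zeros A) (PSeq.zeros B)] at hsat
    rw [PSeq.gMap_zeros, ← selRel_eq_prodRel k₁ k₂] at hsat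
    have hmem : φ ∈ g [] := (htruth φ []).1 hsat
    have hneg : φ.neg ∈ g [] := by rw [hg0]; exact hsub rfl
    rw [hg0] at hmem hneg
    exact (hΓ₀.neg_mem_iff hL).1 hneg hmem
  · -- easy direction: the fusion is contained in the product logic
    refine normalClosure_subset (isNormalLogic_NLogn _) ?_
    rintro φ (⟨ψ, hψ, rfl⟩ | ⟨ψ, hψ, rfl⟩)
    · exact trTo0_mem_NLog2 _ _ (KLog_subset_NLog_nOmega A k₁ hψ)
    · exact trTo1_mem_NLog2 _ _ (KLog_subset_NLog_nOmega B k₂ hψ)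

end Assembly

/-- For tree frames over disjoint countably infinite alphabets:
`Log(N_ω(F₁) × N_ω(F₂)) = Log(F₁) ⊗ Log(F₂)`. -/
theorem log_nOmega_prod_eq (A B : Type) [Countable A] [Infinite A]
    [Countable B] [Infinite B] (k₁ k₂ : TreeKind) :
    NLog2 (prodTau1 (nOmega (treeRel A k₁))) (prodTau2 (nOmega (treeRel B k₂)))
      = Fusion (KLog (treeRel A k₁)) (KLog (treeRel B k₂)) :=
  final_theorem A B k₁ k₂
end
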